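/- arXiv:2309.11437 — 7 statements merged into one kernel-verified Lean document; each statement's English description precedes it below -/
import Mathlib

section
/- Let K(x) = (1/2)∫_{|x|}^∞ e^{-t}/t dt. Then for all x ≠ 0, (1/4)e^{-|x|} log(1 + 2/|x|) ≤ K(x) ≤ (1/2)e^{-|x|} log(1 + 1/|x|). -/
open MeasureTheory Real Set Filter
open Topology

noncomputable def K (x : ℝ) : ℝ := (1/2) * ∫ t in Set.Ioi |x|, Real.exp (-t) / t

namespace KB
noncomputable def f (t : ℝ) : ℝ := Real.exp (-t) / t
noncomputable def E1 (x : ℝ) : ℝ := ∫ t in Set.Ioi x, f t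

lemma f_cont {t : ℝ} (ht : 0 < t) : ContinuousAt f t :=
  (Real.continuous_exp.comp continuous_neg).continuousAt.div continuousAt_id ht.ne'

lemma f_contOn {a : ℝ} (ha : 0 ≤ a) : ContinuousOn f (Set.Ioi a) :=
  fun t ht => (f_cont (lt_of_le_of_lt ha ht)).continuousWithinAt

lemma f_intOn {a : ℝ} (ha : 0 < a) : IntegrableOn f (Set.Ioi a) := by
  have h1 : IntegrableOn (fun t => Real.exp (-t) / a) (Set.Ioi a) := by
    have := exp_neg_integrableOn_Ioi a (by norm_num : (0:ℝ) < 1)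
    have h2 := this.div_const a
    simp at h2
    exact h2
  refine h1.mono' ((f_contOn ha.le).aestronglyMeasurable measurableSet_Ioi) ?_
  filter_upwards [ae_restrict_mem measurableSet_Ioi] with t ht
  have ht0 : 0 < t := ha.trans ht
  rw [Real.norm_eq_abs, abs_of_nonneg (by unfold f; positivity : (0:ℝ) ≤ f t)]
  exact div_le_div_of_nonneg_left (Real.exp_pos _).le ha (le_of_lt ht)

lemma E1_split {a x : ℝ} (ha : 0 < a) (hax : a ≤ x) :
    E1 x = E1 a - ∫ t in a..x, f t := by
  have hu : Set.Ioc a x ∪ Set.Ioi x = Set.Ioi a := Set.Ioc_union_Ioi_eq_Ioi hax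
  have hint1 : IntegrableOn f (Set.Ioc a x) := (f_intOn ha).mono_set Set.Ioc_subset_Ioi_self
  have hint2 : IntegrableOn f (Set.Ioi x) := f_intOn (ha.trans_le hax)
  have := MeasureTheory.setIntegral_union (Set.Ioc_disjoint_Ioi le_rfl)
    measurableSet_Ioi hint1 hint2 (f := f) (μ := volume)
  rw [hu] at this
  rw [intervalIntegral.integral_of_le hax]
  unfold E1
  rw [this]; ring

lemma E1_hasDerivAt {x : ℝ} (hx : 0 < x) : HasDerivAt E1 (-(f x)) x := by
  set a := x/2 with ha
  have ha0 : 0 < a := by positivity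
  have hax : a < x := by linarith
  have hii : IntervalIntegrable f volume a x := by
    rw [intervalIntegrable_iff_integrableOn_Ioc_of_le hax.le]
    exact (f_intOn ha0).mono_set Set.Ioc_subset_Ioi_self
  have hmeas : StronglyMeasurableAtFilter f (𝓝 x) :=
    ⟨Set.Ioi a, Ioi_mem_nhds hax, (f_contOn ha0.le).aestronglyMeasurable measurableSet_Ioi⟩
  have h := intervalIntegral.integral_hasDerivAt_right hii hmeas (f_cont hx)
  have h2 : HasDerivAt (fun u => E1 a - ∫ t in a..u, f t) (-(f x)) x := by
    have h3 := (hasDerivAt_const x (E1 a)).sub h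
    rwa [zero_sub] at h3
  refine h2.congr_of_eventuallyEq ?_
  filter_upwards [Ioi_mem_nhds hax] with y hy
  exact E1_split ha0 (le_of_lt hy)

lemma key1 {x : ℝ} (hx : 0 < x) : 1/(x+1) ≤ Real.log (x+1) - Real.log x := by
  have h1 : 0 < x + 1 := by linarith
  have h := Real.log_le_sub_one_of_pos (show 0 < x/(x+1) by positivity)
  rw [Real.log_div hx.ne' h1.ne'] at h
  have : x/(x+1) - 1 = -(1/(x+1)) := by field_simp; ring
  linarith [h.trans_eq this]

lemma key2 {x : ℝ} (hx : 0 < x) : Real.log (x+2) - Real.log x ≤ 1/x + 1/(x+2) := by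
  have h2 : 0 < x + 2 := by linarith
  have hlog : Real.log (x+2) - Real.log x = ∫ t in x..(x+2), 1/t := by
    rw [integral_one_div_of_pos hx h2, Real.log_div h2.ne' hx.ne']
  set A : ℝ := (x+2)/(2*x) - x/(2*(x+2)) with hA
  set B : ℝ := 1/(2*(x+2)) - 1/(2*x) with hB
  have hmono : ∫ t in x..(x+2), 1/t ≤ ∫ t in x..(x+2), (A + B * t) := by
    refine intervalIntegral.integral_mono_on (by linarith) ?_ ?_ ?_
    · refine ContinuousOn.intervalIntegrable ?_
      refine ContinuousOn.div continuousOn_const continuousOn_id ?_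
      intro t ht
      rw [Set.uIcc_of_le (by linarith : x ≤ x + 2)] at ht
      exact ne_of_gt (lt_of_lt_of_le hx ht.1)
    · exact (continuous_const.add (continuous_const.mul continuous_id)).intervalIntegrable _ _
    · intro t ht
      have ht1 : x ≤ t := ht.1
      have ht2 : t ≤ x + 2 := ht.2
      have ht0 : 0 < t := lt_of_lt_of_le hx ht1
      rw [div_le_iff₀ ht0]
      have key : (A + B * t) * t - 1 = (2*(t-x)*(x+2-t)) / (2*x*(x+2)) := by
        rw [hA, hB]; field_simp; ring
      have h3 : 0 ≤ (2*(t-x)*(x+2-t)) / (2*x*(x+2)) :=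
        div_nonneg (by nlinarith) (by positivity)
      have h4 : 0 ≤ (A + B * t) * t - 1 := key ▸ h3
      linarith
  have hval : ∫ t in x..(x+2), (A + B * t) = 1/x + 1/(x+2) := by
    rw [intervalIntegral.integral_add (intervalIntegrable_const)
      (intervalIntegral.intervalIntegrable_id.const_mul B),
      intervalIntegral.integral_const, intervalIntegral.integral_const_mul,
      integral_id]
    simp only [smul_eq_mul]
    rw [hA, hB]; field_simp; ring
  rw [hlog]; rw [hval] at hmono; exact hmono

lemma logd {c x : ℝ} (hc : 0 < c) (hx : 0 < x) :
    HasDerivAt (fun y => Real.log (y+c) - Real.log y) (1/(x+c) - 1/x) x := by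
  have h1 : HasDerivAt (fun y : ℝ => y + c) 1 x := (hasDerivAt_id x).add_const c
  have h2 := (Real.hasDerivAt_log (by linarith : x + c ≠ 0)).comp x h1
  have h3 := Real.hasDerivAt_log hx.ne'
  have h4 := h2.sub h3
  simp only [one_div, mul_one] at h4 ⊢
  exact h4

lemma expd (x : ℝ) : HasDerivAt (fun y => Real.exp (-y)) (-Real.exp (-x)) x := by
  have h := (Real.hasDerivAt_exp (-x)).comp x (hasDerivAt_neg x)
  simp only [mul_neg, mul_one] at h
  exact h

noncomputable def F (y : ℝ) : ℝ := Real.exp (-y) * (Real.log (y+1) - Real.log y) - E1 y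
noncomputable def G (y : ℝ) : ℝ := E1 y - (1/2) * (Real.exp (-y) * (Real.log (y+2) - Real.log y))

lemma F_deriv {x : ℝ} (hx : 0 < x) :
    HasDerivAt F (Real.exp (-x) * (1/(x+1) - (Real.log (x+1) - Real.log x))) x := by
  have h := ((expd x).mul (logd one_pos hx)).sub (E1_hasDerivAt hx)
  refine h.congr_deriv ?_
  unfold f
  field_simp
  ring

lemma G_deriv {x : ℝ} (hx : 0 < x) :
    HasDerivAt G ((1/2) * Real.exp (-x) *
      ((Real.log (x+2) - Real.log x) - (1/x + 1/(x+2)))) x := by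
  have h := (E1_hasDerivAt hx).sub (((expd x).mul (logd two_pos hx)).const_mul (1/2))
  refine h.congr_deriv ?_
  unfold f
  field_simp
  ring

lemma F_anti : AntitoneOn F (Set.Ioi 0) := by
  refine antitoneOn_of_hasDerivWithinAt_nonpos (convex_Ioi 0)
    (f' := fun x => Real.exp (-x) * (1/(x+1) - (Real.log (x+1) - Real.log x)))
    (fun x hx => ((F_deriv hx).continuousAt).continuousWithinAt)
    (fun x hx => ?_) (fun x hx => ?_)
  · rw [interior_Ioi] at hx
    exact (F_deriv hx).hasDerivWithinAt
  · rw [interior_Ioi] at hx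
    have := key1 hx
    have he := (Real.exp_pos (-x)).le
    nlinarith

lemma G_anti : AntitoneOn G (Set.Ioi 0) := by
  refine antitoneOn_of_hasDerivWithinAt_nonpos (convex_Ioi 0)
    (f' := fun x => (1/2) * Real.exp (-x) *
      ((Real.log (x+2) - Real.log x) - (1/x + 1/(x+2))))
    (fun x hx => ((G_deriv hx).continuousAt).continuousWithinAt)
    (fun x hx => ?_) (fun x hx => ?_)
  · rw [interior_Ioi] at hx
    exact (G_deriv hx).hasDerivWithinAt
  · rw [interior_Ioi] at hx
    have := key2 hx
    have he := (Real.exp_pos (-x)).le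
    nlinarith

lemma tendsto_exp_neg : Tendsto (fun x : ℝ => Real.exp (-x)) atTop (𝓝 0) := by
  have h : Tendsto (fun x : ℝ => -x) atTop atBot := tendsto_neg_atTop_atBot
  exact Real.tendsto_exp_atBot.comp h

lemma tendsto_logc {c : ℝ} (hc : 0 < c) :
    Tendsto (fun x => Real.log (x+c) - Real.log x) atTop (𝓝 0) := by
  have h1 : Tendsto (fun x : ℝ => 1 + c / x) atTop (𝓝 1) := by
    simpa using tendsto_const_nhds.add (Tendsto.div_atTop (tendsto_const_nhds (x := c)) tendsto_id)
  have h2 : Tendsto (fun x : ℝ => Real.log (1 + c / x)) atTop (𝓝 0) := by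
    have := ((Real.continuousAt_log one_ne_zero).tendsto).comp h1
    rwa [Real.log_one] at this
  refine h2.congr' ?_
  filter_upwards [eventually_gt_atTop 0] with x hx
  have hxc : (0:ℝ) < x + c := by linarith
  rw [show 1 + c / x = (x + c) / x by field_simp, Real.log_div hxc.ne' hx.ne']

lemma tendsto_E1 : Tendsto E1 atTop (𝓝 0) := by
  refine squeeze_zero' ?_ ?_ tendsto_exp_neg
  · filter_upwards [eventually_gt_atTop 0] with x hx
    refine setIntegral_nonneg measurableSet_Ioi (fun t ht => ?_)
    have : 0 < t := hx.trans ht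
    unfold f; positivity
  · filter_upwards [eventually_ge_atTop 1] with x hx
    have hx0 : (0:ℝ) < x := lt_of_lt_of_le one_pos hx
    have h1 : IntegrableOn (fun t => Real.exp (-t)) (Set.Ioi x) := by
      simpa using exp_neg_integrableOn_Ioi x one_pos
    have h2 : E1 x ≤ ∫ t in Set.Ioi x, Real.exp (-t) := by
      refine setIntegral_mono_on (f_intOn hx0) h1 measurableSet_Ioi (fun t ht => ?_)
      exact div_le_self (Real.exp_pos _).le (hx.trans (le_of_lt ht))
    rwa [integral_exp_neg_Ioi] at h2

lemma tendsto_F : Tendsto F atTop (𝓝 0) := by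
  have := (tendsto_exp_neg.mul (tendsto_logc one_pos)).sub tendsto_E1
  unfold F
  simpa using this

lemma tendsto_G : Tendsto G atTop (𝓝 0) := by
  have := tendsto_E1.sub ((tendsto_exp_neg.mul (tendsto_logc two_pos)).const_mul (1/2))
  unfold G
  simpa using this

lemma F_nonneg {x : ℝ} (hx : 0 < x) : 0 ≤ F x := by
  refine le_of_tendsto tendsto_F ?_
  filter_upwards [eventually_ge_atTop x] with y hy
  exact F_anti (Set.mem_Ioi.2 hx) (Set.mem_Ioi.2 (lt_of_lt_of_le hx hy)) hy

lemma G_nonneg {x : ℝ} (hx : 0 < x) : 0 ≤ G x := by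
  refine le_of_tendsto tendsto_G ?_
  filter_upwards [eventually_ge_atTop x] with y hy
  exact G_anti (Set.mem_Ioi.2 hx) (Set.mem_Ioi.2 (lt_of_lt_of_le hx hy)) hy

end KB

theorem K_bounds (x : ℝ) (hx : x ≠ 0) :
    (1/4) * Real.exp (-|x|) * Real.log (1 + 2 / |x|) ≤ K x ∧
      K x ≤ (1/2) * Real.exp (-|x|) * Real.log (1 + 1 / |x|) := by
  have hr : 0 < |x| := abs_pos.2 hx
  have hK : K x = (1/2) * KB.E1 |x| := rfl
  have hlog1 : Real.log (1 + 1/|x|) = Real.log (|x|+1) - Real.log |x| := by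
    rw [show (1:ℝ) + 1/|x| = (|x|+1)/|x| by field_simp,
      Real.log_div (by linarith) hr.ne']
  have hlog2 : Real.log (1 + 2/|x|) = Real.log (|x|+2) - Real.log |x| := by
    rw [show (1:ℝ) + 2/|x| = (|x|+2)/|x| by field_simp,
      Real.log_div (by linarith) hr.ne']
  have hF := KB.F_nonneg hr
  have hG := KB.G_nonneg hr
  unfold KB.F at hF
  unfold KB.G at hG
  constructor
  · rw [hK, hlog2]; linarith
  · rw [hK, hlog1]; linarith
end

section
/- Let K(x) = (1/2)∫_{|x|}^∞ e^{-t}/t dt. Then ∫_{-∞}^∞ K(x)² dx = log 2. -/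
open MeasureTheory Real Set Filter

noncomputable def E1 (x : ℝ) : ℝ := ∫ t in Set.Ioi x, Real.exp (-t) / t

lemma f0_contOn {c : ℝ} (hc : 0 < c) :
    ContinuousOn (fun t : ℝ => Real.exp (-t) / t) {t : ℝ | c ≤ t} := by
  apply ContinuousOn.div ((continuous_exp.comp continuous_neg).continuousOn) continuousOn_id
  intro t ht
  exact ne_of_gt (lt_of_lt_of_le hc ht)

lemma integrableOn_exp_neg (c : ℝ) : IntegrableOn (fun t : ℝ => Real.exp (-t)) (Ioi c) := by
  have := exp_neg_integrableOn_Ioi c (one_pos)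
  simpa using this

lemma f0_integrableOn {c : ℝ} (hc : 0 < c) :
    IntegrableOn (fun t : ℝ => Real.exp (-t) / t) (Ioi c) := by
  apply Integrable.mono' ((integrableOn_exp_neg c).const_mul c⁻¹)
  · exact ((f0_contOn hc).mono (fun t ht => le_of_lt ht)).aestronglyMeasurable measurableSet_Ioi
  · rw [ae_restrict_iff' measurableSet_Ioi]
    filter_upwards with t ht
    have htp : 0 < t := lt_trans hc ht
    rw [Real.norm_eq_abs, abs_of_nonneg (by positivity)]
    rw [← div_eq_inv_mul]
    apply div_le_div_of_nonneg_left (Real.exp_pos _).le hc (le_of_lt ht)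

lemma E1_nonneg {x : ℝ} (hx : 0 < x) : 0 ≤ E1 x := by
  apply setIntegral_nonneg measurableSet_Ioi
  intro t ht
  have : 0 < t := lt_trans hx ht
  positivity

lemma E1_split {x y : ℝ} (hx : 0 < x) (hy : 0 < y) :
    E1 y = E1 x - ∫ t in x..y, Real.exp (-t) / t := by
  have key : ∀ a b : ℝ, 0 < a → a ≤ b →
      E1 a = (∫ t in a..b, Real.exp (-t) / t) + E1 b := by
    intro a b ha hab
    rw [intervalIntegral.integral_of_le hab]
    unfold E1
    rw [← setIntegral_union (Ioc_disjoint_Ioi le_rfl) measurableSet_Ioi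
      ((f0_integrableOn ha).mono_set Ioc_subset_Ioi_self)
      ((f0_integrableOn ha).mono_set (Ioi_subset_Ioi hab)),
      Ioc_union_Ioi_eq_Ioi hab]
  rcases le_total x y with h | h
  · rw [key x y hx h]; ring
  · rw [key y x hy h, intervalIntegral.integral_symm]; ring

lemma E1_hasDerivAt {x : ℝ} (hx : 0 < x) : HasDerivAt E1 (-(Real.exp (-x) / x)) x := by
  have hci : ContinuousAt (fun t : ℝ => Real.exp (-t) / t) x :=
    ((continuous_exp.comp continuous_neg).continuousAt).div continuousAt_id (ne_of_gt hx)
  have hd : HasDerivAt (fun y => E1 x - ∫ t in x..y, Real.exp (-t) / t)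
      (-(Real.exp (-x) / x)) x := by
    apply HasDerivAt.const_sub
    exact intervalIntegral.integral_hasDerivAt_right IntervalIntegrable.refl
      (ContinuousAt.stronglyMeasurableAtFilter isOpen_Ioi
        (fun y (hy : y ∈ Ioi (0:ℝ)) =>
          ((continuous_exp.comp continuous_neg).continuousAt).div continuousAt_id (ne_of_gt hy))
        x hx) hci
  apply hd.congr_of_eventuallyEq
  filter_upwards [IsOpen.mem_nhds isOpen_Ioi hx] with y (hy : (0:ℝ) < y)
  exact E1_split hx hy
lemma E1_le_exp {x : ℝ} (hx : 1 ≤ x) : E1 x ≤ Real.exp (-x) := by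
  have h0 : (0:ℝ) < x := lt_of_lt_of_le one_pos hx
  rw [← integral_exp_neg_Ioi x]
  apply setIntegral_mono_on (f0_integrableOn h0) (integrableOn_exp_neg x) measurableSet_Ioi
  intro t ht
  exact div_le_self (Real.exp_pos _).le (le_trans hx (le_of_lt ht))

lemma E1_le_rpow {x : ℝ} (hx : 0 < x) (hx1 : x ≤ 1) : E1 x ≤ 5 * x ^ (-(4:ℝ)⁻¹) := by
  have hsplit : E1 x = (∫ t in x..1, Real.exp (-t) / t) + E1 1 := by
    have := E1_split hx one_pos
    linarith [this]
  have hxr : (1:ℝ) ≤ x ^ (-(4:ℝ)⁻¹) := by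
    apply Real.one_le_rpow_of_pos_of_le_one_of_nonpos hx hx1
    norm_num
  have h1 : E1 1 ≤ 1 := le_trans (E1_le_exp le_rfl) (by
    rw [Real.exp_le_one_iff]; norm_num)
  have h2 : (∫ t in x..1, Real.exp (-t) / t) ≤ ∫ t in x..1, 1 / t := by
    apply intervalIntegral.integral_mono_on hx1
    · apply ContinuousOn.intervalIntegrable
      apply (f0_contOn hx).mono
      intro t ht
      rw [uIcc_of_le hx1] at ht
      exact ht.1
    · apply ContinuousOn.intervalIntegrable
      apply ContinuousOn.div continuousOn_const continuousOn_id
      intro t ht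
      rw [uIcc_of_le hx1] at ht
      exact ne_of_gt (lt_of_lt_of_le hx ht.1)
    · intro t ht
      have htp : (0:ℝ) < t := lt_of_lt_of_le hx ht.1
      gcongr
      exact Real.exp_le_one_iff.mpr (by linarith)
  have h3 : (∫ t in x..1, (1:ℝ) / t) = -Real.log x := by
    rw [integral_one_div]
    · rw [one_div, Real.log_inv]
    · rw [uIcc_of_le hx1]
      intro h
      exact absurd h.1 (not_le.mpr hx)
  have h4 : -Real.log x ≤ 4 * x ^ (-(4:ℝ)⁻¹) := by
    have hinv : (0:ℝ) < x⁻¹ := inv_pos.mpr hx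
    have : Real.log (x⁻¹ ^ ((4:ℝ)⁻¹)) = (4:ℝ)⁻¹ * Real.log x⁻¹ := Real.log_rpow hinv _
    have hle : Real.log (x⁻¹ ^ ((4:ℝ)⁻¹)) ≤ x⁻¹ ^ ((4:ℝ)⁻¹) := by
      have := Real.log_le_sub_one_of_pos (Real.rpow_pos_of_pos hinv ((4:ℝ)⁻¹))
      linarith
    have heq : x⁻¹ ^ ((4:ℝ)⁻¹) = x ^ (-(4:ℝ)⁻¹) := by
      rw [Real.inv_rpow hx.le, ← Real.rpow_neg hx.le]
    rw [← Real.log_inv]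
    calc Real.log x⁻¹ = 4 * Real.log (x⁻¹ ^ ((4:ℝ)⁻¹)) := by rw [this]; ring
    _ ≤ 4 * (x⁻¹ ^ ((4:ℝ)⁻¹)) := by linarith
    _ = 4 * x ^ (-(4:ℝ)⁻¹) := by rw [heq]
  calc E1 x ≤ -Real.log x + 1 := by rw [hsplit]; linarith
  _ ≤ 4 * x ^ (-(4:ℝ)⁻¹) + x ^ (-(4:ℝ)⁻¹) := by linarith
  _ = 5 * x ^ (-(4:ℝ)⁻¹) := by ring
lemma E1_continuousAt {x : ℝ} (hx : 0 < x) : ContinuousAt E1 x :=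
  (E1_hasDerivAt hx).continuousAt

lemma E1_contOn_Ioc : ContinuousOn E1 (Ioc (0:ℝ) 1) :=
  fun x hx => (E1_continuousAt hx.1).continuousWithinAt

lemma E1_contOn_Ioi1 : ContinuousOn E1 (Ioi (1:ℝ)) :=
  fun x hx => (E1_continuousAt (lt_trans one_pos hx)).continuousWithinAt

lemma rpow_integrableOn {r : ℝ} (hr : -1 < r) :
    IntegrableOn (fun x : ℝ => x ^ r) (Ioc (0:ℝ) 1) := by
  have := intervalIntegral.intervalIntegrable_rpow' (a := 0) (b := 1) hr
  rwa [intervalIntegrable_iff_integrableOn_Ioc_of_le zero_le_one] at this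

lemma exp2_integrableOn : IntegrableOn (fun x : ℝ => Real.exp (-x) ^ 2) (Ioi (1:ℝ)) := by
  have h := exp_neg_integrableOn_Ioi (1:ℝ) (two_pos)
  apply h.congr_fun _ measurableSet_Ioi
  intro x _
  simp only [sq, ← Real.exp_add]
  ring_nf

lemma I1 : IntegrableOn (fun x => (E1 x)^2) (Ioi (0:ℝ)) := by
  rw [← Ioc_union_Ioi_eq_Ioi (zero_le_one (α := ℝ))]
  apply IntegrableOn.union
  · apply Integrable.mono' ((rpow_integrableOn (r := -(2:ℝ)⁻¹) (by norm_num)).const_mul 25)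
    · exact (E1_contOn_Ioc.pow 2).aestronglyMeasurable measurableSet_Ioc
    · rw [ae_restrict_iff' measurableSet_Ioc]
      filter_upwards with x hx
      rw [Real.norm_eq_abs, abs_of_nonneg (sq_nonneg _)]
      calc (E1 x)^2 ≤ (5 * x ^ (-(4:ℝ)⁻¹))^2 := by
            apply pow_le_pow_left₀ (E1_nonneg hx.1) (E1_le_rpow hx.1 hx.2)
      _ = 25 * x ^ (-(2:ℝ)⁻¹) := by
            rw [mul_pow, ← Real.rpow_natCast (x ^ (-(4:ℝ)⁻¹)) 2, ← Real.rpow_mul hx.1.le]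
            norm_num
  · apply Integrable.mono' exp2_integrableOn
    · exact (E1_contOn_Ioi1.pow 2).aestronglyMeasurable measurableSet_Ioi
    · rw [ae_restrict_iff' measurableSet_Ioi]
      filter_upwards with x hx
      rw [Real.norm_eq_abs, abs_of_nonneg (sq_nonneg _)]
      exact pow_le_pow_left₀ (E1_nonneg (lt_trans one_pos hx)) (E1_le_exp hx.le) 2

lemma I2 : IntegrableOn (fun x => Real.exp (-x) * E1 x) (Ioi (0: ℝ)) := by
  rw [← Ioc_union_Ioi_eq_Ioi (zero_le_one (α := ℝ))]
  apply IntegrableOn.union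
  · apply Integrable.mono' ((rpow_integrableOn (r := -(4:ℝ)⁻¹) (by norm_num)).const_mul 5)
    · exact (((continuous_exp.comp continuous_neg).continuousOn).mul E1_contOn_Ioc
        ).aestronglyMeasurable measurableSet_Ioc
    · rw [ae_restrict_iff' measurableSet_Ioc]
      filter_upwards with x hx
      rw [Real.norm_eq_abs,
        abs_of_nonneg (mul_nonneg (Real.exp_pos _).le (E1_nonneg hx.1))]
      calc Real.exp (-x) * E1 x ≤ 1 * (5 * x ^ (-(4:ℝ)⁻¹)) := by
            apply mul_le_mul (Real.exp_le_one_iff.mpr (by linarith [hx.1]))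
              (E1_le_rpow hx.1 hx.2) (E1_nonneg hx.1) zero_le_one
      _ = 5 * x ^ (-(4:ℝ)⁻¹) := by ring
  · apply Integrable.mono' exp2_integrableOn
    · exact (((continuous_exp.comp continuous_neg).continuousOn).mul E1_contOn_Ioi1
        ).aestronglyMeasurable measurableSet_Ioi
    · rw [ae_restrict_iff' measurableSet_Ioi]
      filter_upwards with x hx
      have h1 : (0:ℝ) < x := lt_trans one_pos hx
      rw [Real.norm_eq_abs,
        abs_of_nonneg (mul_nonneg (Real.exp_pos _).le (E1_nonneg h1))]
      rw [sq]
      exact mul_le_mul_of_nonneg_left (E1_le_exp hx.le) (Real.exp_pos _).le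

lemma E1_tendsto_atTop : Tendsto E1 atTop (nhds 0) := by
  apply squeeze_zero' (g := fun x => Real.exp (-x))
  · filter_upwards [eventually_ge_atTop (1:ℝ)] with x hx
    exact E1_nonneg (lt_of_lt_of_le one_pos hx)
  · filter_upwards [eventually_ge_atTop (1:ℝ)] with x hx
    exact E1_le_exp hx
  · exact Real.tendsto_exp_neg_atTop_nhds_zero
lemma int_E1_sq : ∫ x in Ioi (0:ℝ), (E1 x)^2
    = 2 * ∫ x in Ioi (0:ℝ), Real.exp (-x) * E1 x := by
  set g : ℝ → ℝ := fun x => x * (E1 x)^2 with hg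
  have hderiv : ∀ x ∈ Ioi (0:ℝ),
      HasDerivAt g ((E1 x)^2 - 2 * (Real.exp (-x) * E1 x)) x := by
    intro x hx
    have hx0 : (0:ℝ) < x := hx
    have h1 : HasDerivAt g (1 * (E1 x)^2 + x * ((2:ℕ) * (E1 x)^(2-1) * (-(Real.exp (-x)/x)))) x :=
      (hasDerivAt_id x).mul ((E1_hasDerivAt hx0).pow 2)
    convert h1 using 1
    field_simp
    ring
  have hcont : ContinuousWithinAt g (Ici (0:ℝ)) 0 := by
    rw [ContinuousWithinAt, hg]
    simp only [zero_mul]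
    apply squeeze_zero' (g := fun x => 25 * Real.sqrt x)
    · filter_upwards [self_mem_nhdsWithin] with x (hx : x ∈ Ici (0:ℝ))
      rcases eq_or_lt_of_le (show (0:ℝ) ≤ x from hx) with h | h
      · simp [← h]
      · positivity
    · have h1 : Iio (1:ℝ) ∈ nhds (0:ℝ) := IsOpen.mem_nhds isOpen_Iio (by norm_num)
      filter_upwards [self_mem_nhdsWithin, eventually_nhdsWithin_of_eventually_nhds
        (eventually_of_mem h1 (fun x hx => hx))] with x (hx : x ∈ Ici (0:ℝ)) (hx1 : x < 1)
      rcases eq_or_lt_of_le (show (0:ℝ) ≤ x from hx) with h | h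
      · simp [← h]
      · calc x * (E1 x)^2 ≤ x * (5 * x ^ (-(4:ℝ)⁻¹))^2 := by
              apply mul_le_mul_of_nonneg_left _ h.le
              exact pow_le_pow_left₀ (E1_nonneg h) (E1_le_rpow h hx1.le) 2
        _ = 25 * Real.sqrt x := by
              rw [mul_pow, ← Real.rpow_natCast (x ^ (-(4:ℝ)⁻¹)) 2, ← Real.rpow_mul h.le,
                Real.sqrt_eq_rpow]
              rw [show x * (5^2 * x ^ (-(4:ℝ)⁻¹ * (2:ℕ))) = 25 * (x^(1:ℝ) * x ^ (-(4:ℝ)⁻¹ * (2:ℕ))) by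
                rw [Real.rpow_one]; ring, ← Real.rpow_add h]
              norm_num
    · have : Tendsto (fun x : ℝ => 25 * Real.sqrt x) (nhds 0) (nhds (25 * Real.sqrt 0)) :=
        (continuous_const.mul Real.continuous_sqrt).tendsto 0
      simp only [Real.sqrt_zero, mul_zero] at this
      exact this.mono_left nhdsWithin_le_nhds
  have htop : Tendsto g atTop (nhds 0) := by
    apply squeeze_zero' (g := fun x => x * Real.exp (-x))
    · filter_upwards [eventually_ge_atTop (1:ℝ)] with x hx
      have : (0:ℝ) < x := lt_of_lt_of_le one_pos hx
      positivity
    · filter_upwards [eventually_ge_atTop (1:ℝ)] with x hx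
      have h0 : (0:ℝ) < x := lt_of_lt_of_le one_pos hx
      calc x * (E1 x)^2 ≤ x * Real.exp (-x)^2 :=
            mul_le_mul_of_nonneg_left (pow_le_pow_left₀ (E1_nonneg h0) (E1_le_exp hx) 2) h0.le
      _ ≤ x * (Real.exp (-x) * 1) := by
            rw [sq]
            apply mul_le_mul_of_nonneg_left _ h0.le
            exact mul_le_mul_of_nonneg_left (Real.exp_le_one_iff.mpr (by linarith))
              (Real.exp_pos _).le
      _ = x * Real.exp (-x) := by ring
    · have := Real.tendsto_pow_mul_exp_neg_atTop_nhds_zero 1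
      simpa using this
  have f'int : IntegrableOn (fun x => (E1 x)^2 - 2 * (Real.exp (-x) * E1 x)) (Ioi (0:ℝ)) :=
    I1.sub (I2.const_mul 2)
  have key := integral_Ioi_of_hasDerivAt_of_tendsto hcont hderiv f'int htop
  simp only [hg, zero_mul, sub_zero] at key
  rw [integral_sub I1 (I2.const_mul 2), MeasureTheory.integral_const_mul] at key
  linarith
lemma mid_eq {x : ℝ} (hx : 0 < x) :
    E1 x - E1 (2*x) = ∫ t in x..(2*x), Real.exp (-t) / t := by
  have := E1_split hx (by positivity : (0:ℝ) < 2*x)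
  linarith

lemma log_two_int {x : ℝ} (hx : 0 < x) : (∫ t in x..(2*x), (1:ℝ)/t) = Real.log 2 := by
  rw [integral_one_div]
  · rw [mul_div_assoc, div_self (ne_of_gt hx), mul_one]
  · rw [uIcc_of_le (by linarith)]
    intro h
    exact absurd h.1 (not_le.mpr hx)

lemma mid_upper {x : ℝ} (hx : 0 < x) :
    (∫ t in x..(2*x), Real.exp (-t) / t) ≤ Real.log 2 := by
  rw [← log_two_int hx]
  apply intervalIntegral.integral_mono_on (by linarith)
  · apply ContinuousOn.intervalIntegrable
    apply (f0_contOn hx).mono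
    intro t ht
    rw [uIcc_of_le (by linarith)] at ht
    exact ht.1
  · apply ContinuousOn.intervalIntegrable
    apply ContinuousOn.div continuousOn_const continuousOn_id
    intro t ht
    rw [uIcc_of_le (by linarith)] at ht
    exact ne_of_gt (lt_of_lt_of_le hx ht.1)
  · intro t ht
    have htp : (0:ℝ) < t := lt_of_lt_of_le hx ht.1
    gcongr
    exact Real.exp_le_one_iff.mpr (by linarith)

lemma mid_lower {x : ℝ} (hx : 0 < x) :
    Real.exp (-(2*x)) * Real.log 2 ≤ ∫ t in x..(2*x), Real.exp (-t) / t := by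
  rw [← log_two_int hx, ← intervalIntegral.integral_const_mul]
  apply intervalIntegral.integral_mono_on (by linarith)
  · apply ContinuousOn.intervalIntegrable
    apply ContinuousOn.mul continuousOn_const
    apply ContinuousOn.div continuousOn_const continuousOn_id
    intro t ht
    rw [uIcc_of_le (by linarith)] at ht
    exact ne_of_gt (lt_of_lt_of_le hx ht.1)
  · apply ContinuousOn.intervalIntegrable
    apply (f0_contOn hx).mono
    intro t ht
    rw [uIcc_of_le (by linarith)] at ht
    exact ht.1
  · intro t ht
    have htp : (0:ℝ) < t := lt_of_lt_of_le hx ht.1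
    rw [mul_one_div]
    gcongr
    exact ht.2

lemma mid_tendsto :
    Tendsto (fun x => E1 x - E1 (2*x)) (nhdsWithin 0 (Ioi (0:ℝ))) (nhds (Real.log 2)) := by
  apply tendsto_of_tendsto_of_tendsto_of_le_of_le'
    (g := fun x => Real.exp (-(2*x)) * Real.log 2) (h := fun _ => Real.log 2)
  · have : Tendsto (fun x : ℝ => Real.exp (-(2*x)) * Real.log 2) (nhds 0)
        (nhds (Real.exp (-(2*0)) * Real.log 2)) := by
      apply Continuous.tendsto
      exact (Real.continuous_exp.comp (continuous_const.mul continuous_id).neg).mul continuous_const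
    simp only [mul_zero, neg_zero, Real.exp_zero, one_mul] at this
    exact this.mono_left nhdsWithin_le_nhds
  · exact tendsto_const_nhds
  · filter_upwards [self_mem_nhdsWithin] with x (hx : (0:ℝ) < x)
    rw [mid_eq hx]
    exact mid_lower hx
  · filter_upwards [self_mem_nhdsWithin] with x (hx : (0:ℝ) < x)
    rw [mid_eq hx]
    exact mid_upper hx

lemma err_tendsto :
    Tendsto (fun x => (Real.exp (-x) - 1) * E1 x) (nhdsWithin 0 (Ioi (0:ℝ))) (nhds 0) := by
  apply squeeze_zero_norm' (a := fun x => 5 * x ^ ((3:ℝ)/4))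
  · have h1 : Iio (1:ℝ) ∈ nhds (0:ℝ) := IsOpen.mem_nhds isOpen_Iio (by norm_num)
    filter_upwards [self_mem_nhdsWithin, eventually_nhdsWithin_of_eventually_nhds
      (eventually_of_mem h1 (fun x hx => hx))] with x (hx : (0:ℝ) < x) (hx1 : x < 1)
    rw [norm_mul, Real.norm_eq_abs, Real.norm_eq_abs, abs_of_nonneg (E1_nonneg hx),
      abs_of_nonpos (by linarith [Real.exp_le_one_iff.mpr (by linarith : -x ≤ 0)])]
    have hb1 : -(Real.exp (-x) - 1) ≤ x := by linarith [Real.add_one_le_exp (-x)]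
    calc -(Real.exp (-x) - 1) * E1 x ≤ x * (5 * x ^ (-(4:ℝ)⁻¹)) := by
          apply mul_le_mul hb1 (E1_le_rpow hx hx1.le) (E1_nonneg hx) hx.le
    _ = 5 * x ^ ((3:ℝ)/4) := by
          rw [show x * (5 * x ^ (-(4:ℝ)⁻¹)) = 5 * (x ^ (1:ℝ) * x ^ (-(4:ℝ)⁻¹)) by
            rw [Real.rpow_one]; ring, ← Real.rpow_add hx]
          norm_num
  · have : ContinuousAt (fun x : ℝ => x ^ ((3:ℝ)/4)) 0 :=
      Real.continuousAt_rpow_const 0 _ (Or.inr (by norm_num))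
    have h2 := (this.tendsto.const_mul (5:ℝ)).mono_left
      (nhdsWithin_le_nhds (s := Ioi (0:ℝ)))
    simp only [Real.zero_rpow (by norm_num : (3:ℝ)/4 ≠ 0), mul_zero] at h2
    exact h2
lemma int_exp_E1 : ∫ x in Ioi (0:ℝ), Real.exp (-x) * E1 x = Real.log 2 := by
  set h : ℝ → ℝ := fun x =>
    if x = 0 then Real.log 2 else Real.exp (-x) * E1 x - E1 (2*x) with hh
  have heq : ∀ x : ℝ, 0 < x → h x = Real.exp (-x) * E1 x - E1 (2*x) := by
    intro x hx
    rw [hh]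
    simp [ne_of_gt hx]
  have hderiv : ∀ x ∈ Ioi (0:ℝ), HasDerivAt h (-(Real.exp (-x) * E1 x)) x := by
    intro x hx
    have hx0 : (0:ℝ) < x := hx
    have A : HasDerivAt (fun y : ℝ => Real.exp (-y)) (Real.exp (-x) * (-1)) x :=
      (hasDerivAt_neg x).exp
    have AB := A.mul (E1_hasDerivAt hx0)
    have C : HasDerivAt (fun y : ℝ => E1 (2*y)) (-(Real.exp (-(2*x)) / (2*x)) * (2*1)) x :=
      (E1_hasDerivAt (by positivity : (0:ℝ) < 2*x)).comp x ((hasDerivAt_id x).const_mul 2)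
    have D := AB.sub C
    have hD : HasDerivAt (fun y => Real.exp (-y) * E1 y - E1 (2*y))
        (-(Real.exp (-x) * E1 x)) x := by
      refine D.congr_deriv ?_
      have hab : Real.exp (-x) * Real.exp (-x) = Real.exp (-(2*x)) := by
        rw [← Real.exp_add]; ring_nf
      have hx' : x ≠ 0 := ne_of_gt hx0
      rw [← hab]
      ring
    apply hD.congr_of_eventuallyEq
    filter_upwards [IsOpen.mem_nhds isOpen_Ioi hx] with y (hy : (0:ℝ) < y)
    exact heq y hy
  have hcont : ContinuousWithinAt h (Ici (0:ℝ)) 0 := by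
    rw [← Set.Ioi_insert, continuousWithinAt_insert_self]
    rw [ContinuousWithinAt]
    have h0 : h 0 = Real.log 2 := by rw [hh]; simp
    rw [h0]
    have base := err_tendsto.add mid_tendsto
    rw [zero_add] at base
    apply base.congr'
    filter_upwards [self_mem_nhdsWithin] with x (hx : (0:ℝ) < x)
    rw [heq x hx]
    ring
  have htop : Tendsto h atTop (nhds 0) := by
    have t1 : Tendsto (fun x => Real.exp (-x) * E1 x) atTop (nhds 0) := by
      apply squeeze_zero_norm' (a := fun x => Real.exp (-x))
      · filter_upwards [eventually_ge_atTop (1:ℝ)] with x hx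
        have h0 : (0:ℝ) < x := lt_of_lt_of_le one_pos hx
        rw [Real.norm_eq_abs, abs_of_nonneg (mul_nonneg (Real.exp_pos _).le (E1_nonneg h0))]
        calc Real.exp (-x) * E1 x ≤ Real.exp (-x) * 1 := by
              apply mul_le_mul_of_nonneg_left _ (Real.exp_pos _).le
              exact le_trans (E1_le_exp hx) (Real.exp_le_one_iff.mpr (by linarith))
        _ = Real.exp (-x) := mul_one _
      · exact Real.tendsto_exp_neg_atTop_nhds_zero
    have t2 : Tendsto (fun x => E1 (2*x)) atTop (nhds 0) :=
      E1_tendsto_atTop.comp (Tendsto.const_mul_atTop two_pos tendsto_id)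
    have base := t1.sub t2
    rw [sub_zero] at base
    apply base.congr'
    filter_upwards [eventually_gt_atTop (0:ℝ)] with x hx
    rw [heq x hx]
  have f'int : IntegrableOn (fun x => -(Real.exp (-x) * E1 x)) (Ioi (0:ℝ)) := I2.neg
  have key := integral_Ioi_of_hasDerivAt_of_tendsto hcont hderiv f'int htop
  have h0 : h 0 = Real.log 2 := by rw [hh]; simp
  rw [h0, integral_neg] at key
  linarith

theorem integral_K_sq : (∫ x : ℝ, (K x)^2) = Real.log 2 := by
  have hK : ∀ x : ℝ, (K x)^2 = (1/4) * (E1 |x|)^2 := by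
    intro x
    show ((1/2) * ∫ t in Set.Ioi |x|, Real.exp (-t) / t)^2 = (1/4) * (E1 |x|)^2
    rw [show E1 |x| = ∫ t in Set.Ioi |x|, Real.exp (-t) / t from rfl]
    ring
  calc (∫ x : ℝ, (K x)^2) = ∫ x : ℝ, (1/4) * (E1 |x|)^2 := by
        congr 1; funext x; exact hK x
  _ = 2 * ∫ y in Ioi (0:ℝ), (1/4) * (E1 y)^2 :=
        integral_comp_abs (f := fun y => (1/4) * (E1 y)^2)
  _ = 2 * ((1/4) * ∫ y in Ioi (0:ℝ), (E1 y)^2) := by rw [MeasureTheory.integral_const_mul]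
  _ = Real.log 2 := by rw [int_E1_sq, int_exp_E1]; ring
end

section
/- Let K(x) = (1/2)∫_{|x|}^∞ e^{-t}/t dt. Then the Fourier transform of K satisfies ∫_{-∞}^∞ e^{-iξx} K(x) dx = arctan(ξ)/ξ for every ξ ≠ 0. -/
open MeasureTheory Real Set Filter Topology

lemma laplace_cos (s : ℝ) : ∫ t in Ioi (0:ℝ), exp (-t) * cos (s * t) = 1 / (1 + s ^ 2) := by
  have hden : (0:ℝ) < 1 + s ^ 2 := by positivity
  set F : ℝ → ℝ := fun t => exp (-t) * (s * sin (s * t) - cos (s * t)) / (1 + s ^ 2) with hF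
  have hderiv : ∀ t ∈ Ici (0:ℝ), HasDerivAt F (exp (-t) * cos (s * t)) t := by
    intro t _
    have h1 : HasDerivAt (fun t : ℝ => exp (-t)) (-exp (-t)) t := by
      simpa using ((hasDerivAt_neg t).exp)
    have h2 : HasDerivAt (fun t : ℝ => sin (s * t)) (cos (s * t) * s) t := by
      simpa [Function.comp_def] using (Real.hasDerivAt_sin (s * t)).comp t ((hasDerivAt_id t).const_mul s)
    have h3 : HasDerivAt (fun t : ℝ => cos (s * t)) (-sin (s * t) * s) t := by
      simpa [Function.comp_def] using (Real.hasDerivAt_cos (s * t)).comp t ((hasDerivAt_id t).const_mul s)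
    have := ((h1.mul ((h2.const_mul s).sub h3)).div_const (1 + s ^ 2))
    refine this.congr_deriv ?_
    rw [div_eq_iff hden.ne']
    simp only [Pi.sub_apply]
    ring
  have hint : IntegrableOn (fun t : ℝ => exp (-t) * cos (s * t)) (Ioi (0:ℝ)) := by
    refine ((exp_neg_integrableOn_Ioi 0 one_pos).mono' ?_ ?_)
    · exact (continuous_exp.comp continuous_neg).aestronglyMeasurable.mul
        ((continuous_cos.comp (continuous_const.mul continuous_id)).aestronglyMeasurable)
    · filter_upwards with t
      rw [Real.norm_eq_abs, abs_mul, abs_exp]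
      calc exp (-t) * |cos (s * t)| ≤ exp (-t) * 1 := by
            exact mul_le_mul_of_nonneg_left (abs_cos_le_one _) (exp_pos _).le
        _ = exp (-1 * t) := by rw [mul_one, neg_one_mul]
  have htends : Tendsto F atTop (𝓝 0) := by
    have hb : Tendsto (fun t : ℝ => exp (-t) * ((|s| + 1) / (1 + s ^ 2))) atTop (𝓝 0) := by
      simpa using (tendsto_exp_neg_atTop_nhds_zero.mul_const ((|s| + 1) / (1 + s ^ 2)))
    refine squeeze_zero_norm (fun t => ?_) hb
    rw [hF]
    simp only [Real.norm_eq_abs, abs_div, abs_mul, abs_exp, abs_of_pos hden]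
    rw [div_le_iff₀ hden] at *
    have : |s * sin (s * t) - cos (s * t)| ≤ |s| + 1 := by
      calc |s * sin (s * t) - cos (s * t)| ≤ |s * sin (s * t)| + |cos (s * t)| := abs_sub _ _
        _ ≤ |s| * 1 + 1 := by
            gcongr
            · rw [abs_mul]; exact mul_le_mul_of_nonneg_left (abs_sin_le_one _) (abs_nonneg _)
            · exact abs_cos_le_one _
        _ = |s| + 1 := by ring
    calc exp (-t) * |s * sin (s * t) - cos (s * t)| ≤ exp (-t) * (|s| + 1) := by
          exact mul_le_mul_of_nonneg_left this (exp_pos _).le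
      _ = exp (-t) * ((|s| + 1) / (1 + s ^ 2)) * (1 + s ^ 2) := by field_simp
  have := integral_Ioi_of_hasDerivAt_of_tendsto' hderiv hint htends
  rw [this, hF]
  simp
  field_simp

lemma arctan_int_pos {ξ : ℝ} (hξ : 0 < ξ) :
    ∫ t in Ioi (0:ℝ), exp (-t) * sin (ξ * t) / t = arctan ξ := by
  classical
  set G : ℝ × ℝ → ℝ :=
    Set.indicator (Ioi (0:ℝ) ×ˢ Ioc (0:ℝ) ξ) (fun p => exp (-p.1) * cos (p.2 * p.1)) with hG
  have hS : MeasurableSet (Ioi (0:ℝ) ×ˢ Ioc (0:ℝ) ξ) :=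
    measurableSet_Ioi.prod measurableSet_Ioc
  have hGmeas : AEStronglyMeasurable G (volume.prod volume) := by
    refine (StronglyMeasurable.indicator ?_ hS).aestronglyMeasurable
    exact (Continuous.mul (continuous_exp.comp (continuous_fst.neg))
      (continuous_cos.comp (continuous_snd.mul continuous_fst))).stronglyMeasurable
  have hGint : Integrable G (volume.prod volume) := by
    have hh : Integrable (fun p : ℝ × ℝ =>
        (Set.indicator (Ioi (0:ℝ)) (fun t => exp (-t)) p.1) *
        (Set.indicator (Ioc (0:ℝ) ξ) (fun _ => (1:ℝ)) p.2)) (volume.prod volume) := by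
      refine Integrable.mul_prod ?_ ?_
      · rw [integrable_indicator_iff measurableSet_Ioi]
        simpa using exp_neg_integrableOn_Ioi 0 one_pos
      · rw [integrable_indicator_iff measurableSet_Ioc]
        exact (integrableOn_const measure_Ioc_lt_top.ne)
    refine hh.mono' hGmeas ?_
    filter_upwards with p
    rw [hG]
    by_cases hp : p ∈ Ioi (0:ℝ) ×ˢ Ioc (0:ℝ) ξ
    · rw [Set.indicator_of_mem hp, Set.indicator_of_mem hp.1, Set.indicator_of_mem hp.2]
      rw [Real.norm_eq_abs, abs_mul, abs_exp]
      simpa using mul_le_mul_of_nonneg_left (abs_cos_le_one (p.2 * p.1)) (exp_pos (-p.1)).le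
    · rw [Set.indicator_of_notMem hp]
      simp only [norm_zero]
      rcases Classical.em (p.1 ∈ Ioi (0:ℝ)) with h1 | h1
      · rcases Classical.em (p.2 ∈ Ioc (0:ℝ) ξ) with h2 | h2
        · exact absurd ⟨h1, h2⟩ hp
        · rw [Set.indicator_of_notMem h2]; simp
      · rw [Set.indicator_of_notMem h1]; simp
  have key := integral_integral_swap (f := fun t s => G (t, s)) (by exact hGint)
  -- compute LHS of key
  have hL : (∫ t : ℝ, ∫ s : ℝ, G (t, s)) = ∫ t in Ioi (0:ℝ), exp (-t) * sin (ξ * t) / t := by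
    rw [← integral_indicator measurableSet_Ioi]
    congr 1
    funext t
    by_cases ht : t ∈ Ioi (0:ℝ)
    · have ht' : (0:ℝ) < t := ht
      have : (fun s => G (t, s)) =
          Set.indicator (Ioc (0:ℝ) ξ) (fun s => exp (-t) * cos (s * t)) := by
        funext s
        rw [hG]
        by_cases hs : s ∈ Ioc (0:ℝ) ξ
        · rw [Set.indicator_of_mem (Set.mem_prod.mpr ⟨ht, hs⟩), Set.indicator_of_mem hs]
        · rw [Set.indicator_of_notMem (fun h => hs h.2), Set.indicator_of_notMem hs]
      rw [this, integral_indicator measurableSet_Ioc, Set.indicator_of_mem ht]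
      rw [← intervalIntegral.integral_of_le hξ.le]
      have : ∫ s in (0:ℝ)..ξ, exp (-t) * cos (s * t) =
          exp (-t) * ∫ s in (0:ℝ)..ξ, cos (s * t) := by
        rw [← intervalIntegral.integral_const_mul]
      rw [this, intervalIntegral.integral_comp_mul_right (fun u => cos u) ht'.ne']
      rw [integral_cos]
      rw [show ξ * t = t * ξ from mul_comm _ _]
      show rexp (-t) * (t⁻¹ • (sin (t * ξ) - sin (0 * t))) = rexp (-t) * sin (t * ξ) / t
      rw [zero_mul, Real.sin_zero, sub_zero, smul_eq_mul]
      ring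
    · have : (fun s => G (t, s)) = fun _ => (0:ℝ) := by
        funext s
        rw [hG, Set.indicator_of_notMem (fun h => ht h.1)]
      rw [this, integral_zero, Set.indicator_of_notMem ht]
  -- compute RHS of key
  have hR : (∫ s : ℝ, ∫ t : ℝ, G (t, s)) = arctan ξ := by
    have : (fun s => ∫ t : ℝ, G (t, s)) =
        Set.indicator (Ioc (0:ℝ) ξ) (fun s => 1 / (1 + s ^ 2)) := by
      funext s
      by_cases hs : s ∈ Ioc (0:ℝ) ξ
      · have : (fun t => G (t, s)) =
            Set.indicator (Ioi (0:ℝ)) (fun t => exp (-t) * cos (s * t)) := by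
          funext t
          rw [hG]
          by_cases ht : t ∈ Ioi (0:ℝ)
          · rw [Set.indicator_of_mem (Set.mem_prod.mpr ⟨ht, hs⟩), Set.indicator_of_mem ht]
          · rw [Set.indicator_of_notMem (fun h => ht h.1), Set.indicator_of_notMem ht]
        rw [this, integral_indicator measurableSet_Ioi, laplace_cos s,
          Set.indicator_of_mem hs]
      · have : (fun t => G (t, s)) = fun _ => (0:ℝ) := by
          funext t
          rw [hG, Set.indicator_of_notMem (fun h => hs h.2)]
        rw [this, integral_zero, Set.indicator_of_notMem hs]
    rw [this, integral_indicator measurableSet_Ioc,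
      ← intervalIntegral.integral_of_le hξ.le, integral_one_div_one_add_sq, arctan_zero, sub_zero]
  rw [hL, hR] at key
  exact key

lemma arctan_int (ξ : ℝ) :
    ∫ t in Ioi (0:ℝ), exp (-t) * sin (ξ * t) / t = arctan ξ := by
  rcases lt_trichotomy ξ 0 with h | h | h
  · have := arctan_int_pos (neg_pos.mpr h)
    have heq : ∀ t : ℝ, exp (-t) * sin (ξ * t) / t = -(exp (-t) * sin (-ξ * t) / t) := by
      intro t
      rw [show (-ξ) * t = -(ξ * t) by ring, Real.sin_neg]
      ring
    rw [show arctan ξ = -arctan (-ξ) by rw [Real.arctan_neg, neg_neg]]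
    rw [← this, ← integral_neg]
    exact integral_congr_ae (Filter.Eventually.of_forall fun t => heq t)
  · simp [h]
  · exact arctan_int_pos h

theorem fourier_K (ξ : ℝ) (hξ : ξ ≠ 0) :
    (∫ x : ℝ, Complex.exp (-(Complex.I * ξ * x)) * (K x : ℂ)) =
      ((Real.arctan ξ / ξ : ℝ) : ℂ) := by
  classical
  set S : Set (ℝ × ℝ) := {p : ℝ × ℝ | |p.1| < p.2} with hSdef
  have hSopen : IsOpen S := isOpen_lt (continuous_abs.comp continuous_fst) continuous_snd
  have hS : MeasurableSet S := hSopen.measurableSet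
  set g : ℝ × ℝ → ℂ := fun p =>
    Complex.exp (-(Complex.I * ξ * p.1)) * ((exp (-p.2) / p.2 : ℝ) : ℂ) with hgdef
  set F : ℝ × ℝ → ℂ := Set.indicator S g with hFdef
  have hgmeas : Measurable g := by
    apply Measurable.mul
    · exact (Complex.measurable_exp.comp
        ((measurable_const.mul (Complex.measurable_ofReal.comp measurable_fst)).neg))
    · exact Complex.measurable_ofReal.comp
        ((measurable_exp.comp measurable_snd.neg).div measurable_snd)
  have hFmeas : AEStronglyMeasurable F (volume.prod volume) :=
    ((hgmeas.indicator hS).stronglyMeasurable).aestronglyMeasurable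
  -- section descriptions
  have hsec1 : ∀ x t : ℝ, ((x, t) ∈ S ↔ t ∈ Ioi |x|) := by
    intro x t; simp [hSdef, Set.mem_Ioi]
  have hsec2 : ∀ x t : ℝ, ((x, t) ∈ S ↔ x ∈ Ioo (-t) t) := by
    intro x t; simp [hSdef, abs_lt, Set.mem_Ioo]
  have hsecx : ∀ t : ℝ, (fun x => F (x, t)) =
      Set.indicator (Ioo (-t) t) (fun x => g (x, t)) := by
    intro t
    funext x
    by_cases h : (x, t) ∈ S
    · rw [hFdef, Set.indicator_of_mem h, Set.indicator_of_mem ((hsec2 x t).mp h)]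
    · rw [hFdef, Set.indicator_of_notMem h,
        Set.indicator_of_notMem (fun hh => h ((hsec2 x t).mpr hh))]
  have hsect : ∀ x : ℝ, (fun t => F (x, t)) =
      Set.indicator (Ioi |x|) (fun t => g (x, t)) := by
    intro x
    funext t
    by_cases h : (x, t) ∈ S
    · rw [hFdef, Set.indicator_of_mem h, Set.indicator_of_mem ((hsec1 x t).mp h)]
    · rw [hFdef, Set.indicator_of_notMem h,
        Set.indicator_of_notMem (fun hh => h ((hsec1 x t).mpr hh))]
  have hnormg : ∀ x t : ℝ, 0 < t → ‖g (x, t)‖ = exp (-t) / t := by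
    intro x t ht
    rw [hgdef]
    simp only [norm_mul, Complex.norm_exp, Complex.norm_real, Real.norm_eq_abs]
    have : (-(Complex.I * ξ * x)).re = 0 := by simp
    rw [this, Real.exp_zero, one_mul, abs_of_pos (div_pos (exp_pos _) ht)]
  -- integrability
  have hFint : Integrable F (volume.prod volume) := by
    rw [integrable_prod_iff' hFmeas]
    constructor
    · filter_upwards with t
      rw [hsecx t]
      rw [integrable_indicator_iff measurableSet_Ioo]
      have hc : Continuous (fun x : ℝ => g (x, t)) := by
        show Continuous fun x : ℝ =>
          Complex.exp (-(Complex.I * ξ * x)) * ((exp (-t) / t : ℝ) : ℂ)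
        exact (Complex.continuous_exp.comp
          ((continuous_const.mul (Complex.continuous_ofReal)).neg)).mul continuous_const
      exact hc.integrableOn_Icc.mono_set Set.Ioo_subset_Icc_self
    · have hval : (fun t : ℝ => ∫ x, ‖F (x, t)‖) =
          Set.indicator (Ioi (0:ℝ)) (fun t => 2 * exp (-t)) := by
        funext t
        by_cases ht : t ∈ Ioi (0:ℝ)
        · have ht' : (0:ℝ) < t := ht
          have h1 : (fun x => ‖F (x, t)‖) =
              Set.indicator (Ioo (-t) t) (fun x => exp (-t) / t) := by
            funext x
            rw [congrFun (hsecx t) x, norm_indicator_eq_indicator_norm]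
            by_cases hx : x ∈ Ioo (-t) t
            · rw [Set.indicator_of_mem hx, Set.indicator_of_mem hx, hnormg x t ht']
            · rw [Set.indicator_of_notMem hx, Set.indicator_of_notMem hx]
          rw [h1, integral_indicator measurableSet_Ioo, setIntegral_const,
            Set.indicator_of_mem ht]
          rw [measureReal_def, Real.volume_Ioo]
          rw [ENNReal.toReal_ofReal (by linarith)]
          rw [smul_eq_mul]
          field_simp
          ring
        · have h0 : (fun x => ‖F (x, t)‖) = fun _ => (0:ℝ) := by
            funext x
            rw [congrFun (hsecx t) x, Set.indicator_of_notMem, norm_zero]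
            intro hx
            have := hx.1.trans hx.2
            simp only [Set.mem_Ioi, not_lt] at ht
            linarith
          rw [h0, integral_zero, Set.indicator_of_notMem ht]
      rw [hval, integrable_indicator_iff measurableSet_Ioi]
      have : IntegrableOn (fun t : ℝ => exp (-t)) (Ioi (0:ℝ)) := by
        simpa using exp_neg_integrableOn_Ioi 0 one_pos
      exact this.const_mul 2
  have key := integral_integral_swap (f := fun x t => F (x, t)) (by exact hFint)
  -- LHS of key
  have hL : (∫ x : ℝ, ∫ t : ℝ, F (x, t)) =
      2 * ∫ x : ℝ, Complex.exp (-(Complex.I * ξ * x)) * (K x : ℂ) := by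
    rw [← integral_const_mul]
    congr 1
    funext x
    rw [hsect x, integral_indicator measurableSet_Ioi]
    rw [hgdef]
    simp only
    rw [integral_const_mul,
      show (∫ t in Ioi |x|, ((exp (-t) / t : ℝ) : ℂ)) =
        ((∫ t in Ioi |x|, exp (-t) / t : ℝ) : ℂ) from integral_ofReal,
      show (∫ t in Ioi |x|, exp (-t) / t) = 2 * K x by rw [K]; ring]
    push_cast
    ring
  -- RHS of key
  have hR : (∫ t : ℝ, ∫ x : ℝ, F (x, t)) = ((2 / ξ * arctan ξ : ℝ) : ℂ) := by
    have hval : (fun t : ℝ => ∫ x : ℝ, F (x, t)) =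
        Set.indicator (Ioi (0:ℝ))
          (fun t => ((2 / ξ * (exp (-t) * sin (ξ * t) / t) : ℝ) : ℂ)) := by
      funext t
      by_cases ht : t ∈ Ioi (0:ℝ)
      · have ht' : (0:ℝ) < t := ht
        rw [hsecx t, integral_indicator measurableSet_Ioo, Set.indicator_of_mem ht]
        rw [hgdef]
        simp only
        rw [integral_mul_const]
        have hIoo : ∫ x in Ioo (-t) t, Complex.exp (-(Complex.I * ξ * x)) =
            ∫ x in (-t)..t, Complex.exp (-(Complex.I * ξ) * x) := by
          rw [intervalIntegral.integral_of_le (by linarith), ← integral_Ioc_eq_integral_Ioo]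
          congr 1
          funext x
          ring_nf
        have hc : (-(Complex.I * ξ) : ℂ) ≠ 0 := by
          simp [Complex.ext_iff, hξ, Complex.I_ne_zero]
        rw [hIoo, integral_exp_mul_complex hc, Complex.ofReal_neg]
        have hnum : Complex.exp (-(Complex.I * ξ) * t) - Complex.exp (-(Complex.I * ξ) * (-t)) =
            -2 * Complex.I * (Real.sin (ξ * t) : ℂ) := by
          rw [show (-(Complex.I * ξ) * t : ℂ) = (-(ξ * t) : ℝ) * Complex.I by push_cast; ring,
            show (-(Complex.I * ξ) * (-t) : ℂ) = ((ξ * t : ℝ)) * Complex.I by push_cast; ring,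
            Complex.exp_mul_I, Complex.exp_mul_I]
          rw [Complex.ofReal_neg, Complex.cos_neg, Complex.sin_neg,
            ← Complex.ofReal_sin]
          ring
        rw [hnum]
        have htne : ((t:ℂ)) ≠ 0 := Complex.ofReal_ne_zero.mpr ht'.ne'
        have hxine : ((ξ:ℂ)) ≠ 0 := Complex.ofReal_ne_zero.mpr hξ
        push_cast
        field_simp
      · rw [hsecx t, Set.indicator_of_notMem ht]
        have : Ioo (-t) t = ∅ := by
          apply Set.Ioo_eq_empty
          simp only [Set.mem_Ioi, not_lt] at ht
          intro hlt; linarith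
        rw [this]
        simp
    rw [hval, integral_indicator measurableSet_Ioi,
      show (∫ t in Ioi (0:ℝ), ((2 / ξ * (exp (-t) * sin (ξ * t) / t) : ℝ) : ℂ)) =
        ((∫ t in Ioi (0:ℝ), 2 / ξ * (exp (-t) * sin (ξ * t) / t) : ℝ) : ℂ) from
        integral_ofReal,
      integral_const_mul, arctan_int]
  rw [hL, hR] at key
  have : (2:ℂ) ≠ 0 := two_ne_zero
  field_simp at key ⊢
  rw [mul_div_assoc] at key
  exact mul_left_cancel₀ this (by rw [key, Complex.ofReal_mul, Complex.ofReal_ofNat])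
end

section
/- Let K(x) = (1/2)∫_{|x|}^∞ e^{-t}/t dt, and define the operator L(u)(x) = u(x) - ∫_0^∞ K(x-y) u(y) dy. Suppose ū ∈ C([0,∞)) satisfies L(ū)(x) ≥ 0 for all x > 0, and lim_{x→∞} ū(x) exists in [0, ∞]. Then ū(x) ≥ 0 for all x ≥ 0. -/
open MeasureTheory Real Set Filter

namespace MaxPrincipleAux

noncomputable def g : ℝ → ENNReal := fun t => ENNReal.ofReal (Real.exp (-t) / t)

lemma f_meas : Measurable (fun t : ℝ => Real.exp (-t) / t) :=
  ((Real.continuous_exp.comp continuous_neg).measurable).div measurable_id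

lemma g_meas : Measurable g := ENNReal.measurable_ofReal.comp f_meas

noncomputable def G : ℝ → ENNReal := fun a => ∫⁻ t in Set.Ioi a, g t

lemma G_antitone : Antitone G := fun a b hab =>
  lintegral_mono_set (Set.Ioi_subset_Ioi hab)

lemma G_meas : Measurable G := G_antitone.measurable

lemma integrableOn_aux {a : ℝ} (ha : 0 < a) :
    IntegrableOn (fun t => Real.exp (-t) / t) (Set.Ioi a) := by
  have h1 : IntegrableOn (fun t => Real.exp (-t) * a⁻¹) (Set.Ioi a) := by
    have := (exp_neg_integrableOn_Ioi a (b := 1) one_pos).mul_const a⁻¹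
    simp at this; exact this
  refine h1.mono' f_meas.aestronglyMeasurable ?_
  filter_upwards [ae_restrict_mem measurableSet_Ioi] with t ht
  have ht0 : 0 < t := lt_trans ha ht
  rw [Real.norm_of_nonneg (by positivity), div_eq_mul_inv]
  exact mul_le_mul_of_nonneg_left (by
    exact inv_anti₀ ha (le_of_lt ht)) (Real.exp_pos _).le

lemma K_repr (x : ℝ) : K x = (1/2) * (G |x|).toReal := by
  unfold K G g
  rw [integral_eq_lintegral_of_nonneg_ae ?_ f_meas.aestronglyMeasurable]
  filter_upwards [ae_restrict_mem measurableSet_Ioi] with t ht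
  have : 0 < t := lt_of_le_of_lt (abs_nonneg x) ht
  positivity

lemma K_nonneg (x : ℝ) : 0 ≤ K x := by
  rw [K_repr]; positivity

lemma K_meas : Measurable K := by
  have : K = fun x => (1/2) * (G |x|).toReal := funext K_repr
  rw [this]
  exact measurable_const.mul (ENNReal.measurable_toReal.comp
    (G_meas.comp continuous_abs.measurable))

lemma G_lt_top {a : ℝ} (ha : 0 < a) : G a < ⊤ :=
  (integrableOn_aux ha).lintegral_lt_top

lemma K_pos {x : ℝ} (hx : x ≠ 0) : 0 < K x := by
  have hax : 0 < |x| := abs_pos.2 hx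
  have hint := integrableOn_aux hax
  have hnn : 0 ≤ᵐ[volume.restrict (Set.Ioi |x|)] fun t => Real.exp (-t) / t := by
    filter_upwards [ae_restrict_mem measurableSet_Ioi] with t ht
    have : 0 < t := lt_trans hax ht
    positivity
  have hpos : 0 < ∫ t in Set.Ioi |x|, Real.exp (-t) / t := by
    rw [setIntegral_pos_iff_support_of_nonneg_ae hnn hint]
    have hsub : Set.Ioi |x| ⊆ Function.support (fun t => Real.exp (-t) / t) ∩ Set.Ioi |x| := by
      intro t ht
      have ht0 : 0 < t := lt_trans hax ht
      refine ⟨?_, ht⟩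
      simp only [Function.mem_support]
      positivity
    calc (0 : ENNReal) < volume (Set.Ioi |x|) := by simp [Real.volume_Ioi]
      _ ≤ _ := measure_mono hsub
  unfold K
  positivity

lemma S_meas : MeasurableSet {p : ℝ × ℝ | |p.1| < p.2} :=
  (isOpen_lt (continuous_abs.comp continuous_fst) continuous_snd).measurableSet

lemma lint_G : ∫⁻ x : ℝ, G |x| = 2 := by
  have h1 : ∀ x : ℝ, G |x| =
      ∫⁻ t : ℝ, ({p : ℝ × ℝ | |p.1| < p.2}).indicator (fun p => g p.2) (x, t) := by
    intro x
    unfold G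
    rw [← lintegral_indicator measurableSet_Ioi]
    exact lintegral_congr fun t => by
      by_cases ht : |x| < t <;> simp [Set.indicator_apply, Set.mem_Ioi, ht]
  calc ∫⁻ x : ℝ, G |x|
      = ∫⁻ x : ℝ, ∫⁻ t : ℝ, ({p : ℝ × ℝ | |p.1| < p.2}).indicator (fun p => g p.2) (x, t) := by
        simp_rw [h1]
    _ = ∫⁻ t : ℝ, ∫⁻ x : ℝ, ({p : ℝ × ℝ | |p.1| < p.2}).indicator (fun p => g p.2) (x, t) := by
        apply lintegral_lintegral_swap
        exact ((g_meas.comp measurable_snd).indicator S_meas).aemeasurable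
    _ = ∫⁻ t : ℝ, g t * ENNReal.ofReal (t - -t) := by
        congr 1
        funext t
        have : (fun x : ℝ => ({p : ℝ × ℝ | |p.1| < p.2}).indicator (fun p => g p.2) (x, t))
            = (Set.Ioo (-t) t).indicator (fun _ => g t) := by
          funext x
          by_cases hx : |x| < t
          · simp [Set.indicator_apply, hx, Set.mem_Ioo, abs_lt.1 hx]
          · have hx2 : x ∉ Set.Ioo (-t) t := fun hc => hx (abs_lt.2 ⟨hc.1, hc.2⟩)
            simp [Set.indicator_apply, hx, hx2]
        rw [this, lintegral_indicator measurableSet_Ioo, setLIntegral_const,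
          Real.volume_Ioo]
    _ = ∫⁻ t : ℝ, (Set.Ioi (0:ℝ)).indicator (fun t => ENNReal.ofReal (2 * Real.exp (-t))) t := by
        congr 1
        funext t
        by_cases ht : 0 < t
        · have ht' : t ≠ 0 := ne_of_gt ht
          rw [Set.indicator_of_mem (Set.mem_Ioi.2 ht)]
          unfold g
          rw [← ENNReal.ofReal_mul (by positivity)]
          congr 1
          field_simp
          ring
        · rw [Set.indicator_of_notMem (by simpa [Set.mem_Ioi] using ht)]
          have : ENNReal.ofReal (t - -t) = 0 := by
            rw [ENNReal.ofReal_eq_zero]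
            push_neg at ht
            linarith
          rw [this, mul_zero]
    _ = ∫⁻ t in Set.Ioi (0:ℝ), ENNReal.ofReal (2 * Real.exp (-t)) := by
        rw [lintegral_indicator measurableSet_Ioi]
    _ = ENNReal.ofReal (∫ t in Set.Ioi (0:ℝ), 2 * Real.exp (-t)) := by
        rw [← ofReal_integral_eq_lintegral_ofReal]
        · have := (exp_neg_integrableOn_Ioi 0 (b := 1) one_pos).const_mul 2
          simpa using this
        · filter_upwards with t
          positivity
    _ = 2 := by
        rw [integral_const_mul, integral_exp_neg_Ioi_zero]
        norm_num

lemma ae_ne_zero : ∀ᵐ x : ℝ, x ≠ 0 := by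
  rw [ae_iff]
  have : {a : ℝ | ¬ a ≠ 0} = {0} := by ext a; simp
  rw [this]
  exact measure_singleton 0

lemma lint_K : ∫⁻ x : ℝ, ENNReal.ofReal (K x) = 1 := by
  have hhalf : ENNReal.ofReal ((1:ℝ)/2) = 1/2 := by
    rw [ENNReal.ofReal_div_of_pos two_pos]
    norm_num
  have hae : ∀ᵐ x : ℝ, ENNReal.ofReal (K x) = (1/2 : ENNReal) * G |x| := by
    filter_upwards [ae_ne_zero] with x hx
    rw [K_repr, ENNReal.ofReal_mul (by norm_num), hhalf,
      ENNReal.ofReal_toReal (G_lt_top (abs_pos.2 hx)).ne]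
  rw [lintegral_congr_ae hae,
    lintegral_const_mul _ (show Measurable fun a : ℝ => G |a| from G_meas.comp continuous_abs.measurable), lint_G]
  rw [ENNReal.div_mul_cancel (by norm_num) (by norm_num)]

lemma K_integrable : Integrable K := by
  refine ⟨K_meas.aestronglyMeasurable, ?_⟩
  rw [hasFiniteIntegral_iff_ofReal (Filter.Eventually.of_forall K_nonneg), lint_K]
  exact ENNReal.one_lt_top

lemma K_total : ∫ x : ℝ, K x = 1 := by
  rw [integral_eq_lintegral_of_nonneg_ae (Filter.Eventually.of_forall K_nonneg)
    K_meas.aestronglyMeasurable, lint_K]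
  simp

lemma shift_indicator (x : ℝ) :
    (Set.Ioi (0:ℝ)).indicator (fun y => K (x - y)) =
      fun y => (Set.Iio x).indicator K (x - y) := by
  funext y
  by_cases h : 0 < y
  · rw [Set.indicator_of_mem (Set.mem_Ioi.2 h),
      Set.indicator_of_mem (Set.mem_Iio.2 (by linarith))]
  · rw [Set.indicator_of_notMem (by simpa [Set.mem_Ioi] using h),
      Set.indicator_of_notMem (by simp only [Set.mem_Ioi, not_lt] at h
                                  simp only [Set.mem_Iio, not_lt]; linarith)]

lemma integrableOn_shift (x : ℝ) : IntegrableOn (fun y => K (x - y)) (Set.Ioi 0) := by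
  rw [← integrable_indicator_iff measurableSet_Ioi, shift_indicator]
  exact (K_integrable.indicator measurableSet_Iio).comp_sub_left x

lemma integral_shift (x : ℝ) :
    ∫ y in Set.Ioi (0:ℝ), K (x - y) = ∫ t in Set.Iio x, K t := by
  rw [← integral_indicator measurableSet_Ioi, shift_indicator,
    integral_sub_left_eq_self ((Set.Iio x).indicator K) volume x,
    integral_indicator measurableSet_Iio]

lemma c_lt_one {x : ℝ} (hx : 0 < x) : ∫ t in Set.Iio x, K t < 1 := by
  have hsplit := intervalIntegral.integral_Iio_add_Ici (b := x) (f := K) (μ := volume)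
    K_integrable.integrableOn K_integrable.integrableOn
  have hpos : 0 < ∫ t in Set.Ici x, K t := by
    rw [setIntegral_pos_iff_support_of_nonneg_ae
      (Filter.Eventually.of_forall K_nonneg) K_integrable.integrableOn]
    have hsub : Set.Ici x ⊆ Function.support K ∩ Set.Ici x := by
      intro y hy
      exact ⟨(K_pos (ne_of_gt (lt_of_lt_of_le hx hy))).ne', hy⟩
    calc (0 : ENNReal) < volume (Set.Ici x) := by simp [Real.volume_Ici]
      _ ≤ _ := measure_mono hsub
  have := K_total
  linarith

lemma c_nonneg (x : ℝ) : 0 ≤ ∫ t in Set.Iio x, K t :=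
  setIntegral_nonneg measurableSet_Iio (fun y _ => K_nonneg y)

lemma c_mono {x y : ℝ} (h : x ≤ y) :
    ∫ t in Set.Iio x, K t ≤ ∫ t in Set.Iio y, K t :=
  setIntegral_mono_set K_integrable.integrableOn
    (Filter.Eventually.of_forall K_nonneg)
    (HasSubset.Subset.eventuallyLE (Set.Iio_subset_Iio h))

end MaxPrincipleAux

open MaxPrincipleAux

theorem max_principle (u : ℝ → ℝ)
    (hcont : ContinuousOn u (Set.Ici 0))
    (hlim : (∃ l : ℝ, 0 ≤ l ∧ Filter.Tendsto u Filter.atTop (nhds l)) ∨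
      Filter.Tendsto u Filter.atTop Filter.atTop)
    (hsuper : ∀ x > (0:ℝ), 0 ≤ u x - ∫ y in Set.Ioi (0:ℝ), K (x - y) * u y) :
    ∀ x ≥ (0:ℝ), 0 ≤ u x := by
  by_contra hcon
  push_neg at hcon
  obtain ⟨x₀, hx₀, hux₀⟩ := hcon
  have hev : ∀ᶠ x in atTop, u x₀ < u x := by
    rcases hlim with ⟨l, hl, hlt⟩ | ht
    · exact hlt.eventually_const_lt (lt_of_lt_of_le hux₀ hl)
    · exact ht.eventually_gt_atTop _
  rw [eventually_atTop] at hev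
  obtain ⟨M, hM⟩ := hev
  set N := max M x₀ with hN
  have hN0 : 0 ≤ N := le_trans hx₀ (le_max_right _ _)
  obtain ⟨z, hzmem, hzmin⟩ := isCompact_Icc.exists_isMinOn
    (Set.nonempty_Icc.2 hN0) (hcont.mono (fun y hy => hy.1))
  set m := u z with hm
  have hx₀mem : x₀ ∈ Set.Icc 0 N := ⟨hx₀, le_max_right _ _⟩
  have hm_neg : m < 0 := lt_of_le_of_lt (isMinOn_iff.1 hzmin x₀ hx₀mem) hux₀
  have hm_glob : ∀ y : ℝ, 0 ≤ y → m ≤ u y := by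
    intro y hy
    by_cases hyN : y ≤ N
    · exact isMinOn_iff.1 hzmin y ⟨hy, hyN⟩
    · push_neg at hyN
      have : u x₀ < u y := hM y (le_of_lt (lt_of_le_of_lt (le_max_left _ _) hyN))
      have := isMinOn_iff.1 hzmin x₀ hx₀mem
      linarith
  have claim : ∀ x : ℝ, 0 < x →
      m * (∫ t in Set.Iio x, K t) ≤ u x ∨ 0 ≤ u x := by
    intro x hx
    by_cases hint : IntegrableOn (fun y => K (x - y) * u y) (Set.Ioi 0)
    · left
      have h1 := hsuper x hx
      have h2 : ∫ y in Set.Ioi (0:ℝ), K (x - y) * m ≤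
          ∫ y in Set.Ioi (0:ℝ), K (x - y) * u y := by
        apply setIntegral_mono_on ((integrableOn_shift x).mul_const m) hint
          measurableSet_Ioi
        intro y hy
        exact mul_le_mul_of_nonneg_left (hm_glob y (le_of_lt hy)) (K_nonneg _)
      have h3 : ∫ y in Set.Ioi (0:ℝ), K (x - y) * m =
          m * ∫ t in Set.Iio x, K t := by
        rw [MeasureTheory.integral_mul_const, integral_shift, mul_comm]
      linarith
    · right
      have h1 := hsuper x hx
      rw [MeasureTheory.integral_undef hint] at h1
      linarith
  rcases eq_or_lt_of_le hzmem.1 with hz0 | hz0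
  · -- z = 0
    set c1 := ∫ t in Set.Iio (1:ℝ), K t with hc1
    have hb : ∀ x ∈ Set.Ioc (0:ℝ) 1, m * c1 ≤ u x := by
      rintro x ⟨hx0, hx1⟩
      rcases claim x hx0 with h | h
      · have hcc : ∫ t in Set.Iio x, K t ≤ c1 := c_mono hx1
        have := mul_le_mul_of_nonpos_left hcc (le_of_lt hm_neg)
        linarith
      · have : m * c1 ≤ 0 := mul_nonpos_of_nonpos_of_nonneg (le_of_lt hm_neg) (c_nonneg 1)
        linarith
    have hcont0 : Tendsto u (nhdsWithin 0 (Set.Ioi 0)) (nhds (u 0)) :=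
      (hcont 0 (Set.self_mem_Ici)).mono_left
        (nhdsWithin_mono _ Set.Ioi_subset_Ici_self)
    have hge : m * c1 ≤ u 0 := by
      apply ge_of_tendsto hcont0
      filter_upwards [Ioc_mem_nhdsGT one_pos] with x hx
      exact hb x hx
    have hu0 : u 0 = m := by rw [hm, ← hz0]
    have hc1lt : c1 < 1 := c_lt_one one_pos
    nlinarith
  · -- z > 0
    rcases claim z hz0 with h | h
    · have hc : ∫ t in Set.Iio z, K t < 1 := c_lt_one hz0
      nlinarith
    · linarith
end

section
/- Let K(x) = (1/2)∫_{|x|}^∞ e^{-t}/t dt. Define L(u)(x) = u(x) - ∫_0^∞ K(x-y) u(y) dy. Then the function ū(x) = 1 + x (for x ≥ 0) satisfies L(ū)(x) = (e^{-x}/4)(1+x) - (x/2)K(x)(2+x) and this quantity is nonnegative for all x ≥ 0. -/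
open MeasureTheory Real Set Filter

lemma gcontOn {s : Set ℝ} (hs : ∀ t ∈ s, t ≠ 0) :
    ContinuousOn (fun t : ℝ => Real.exp (-t) / t) s := by
  intro t ht
  exact (((Real.continuous_exp.comp continuous_neg).continuousAt).div continuousAt_id
    (hs t ht)).continuousWithinAt

lemma gInt {a : ℝ} (ha : 0 < a) : IntegrableOn (fun t : ℝ => Real.exp (-t) / t) (Set.Ioi a) := by
  have hbase : IntegrableOn (fun t : ℝ => Real.exp (-t) * a⁻¹) (Set.Ioi a) := by
    have := (exp_neg_integrableOn_Ioi a (by norm_num : (0:ℝ) < 1))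
    simpa [IntegrableOn] using this.mul_const a⁻¹
  refine hbase.mono' ?_ ?_
  · exact (gcontOn (fun t ht => (lt_trans ha ht).ne')).aestronglyMeasurable measurableSet_Ioi
  · filter_upwards [ae_restrict_mem measurableSet_Ioi] with t ht
    have ht0 : 0 < t := lt_trans ha ht
    rw [Real.norm_eq_abs, abs_of_nonneg (by positivity)]
    rw [div_eq_mul_inv]
    exact mul_le_mul_of_nonneg_left (by exact inv_anti₀ ha ht.le) (Real.exp_pos _).le

lemma K_nonneg (x : ℝ) : 0 ≤ K x := by
  unfold K
  apply mul_nonneg (by norm_num)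
  apply integral_nonneg_of_ae
  filter_upwards [ae_restrict_mem measurableSet_Ioi] with t ht
  have : 0 < t := lt_of_le_of_lt (abs_nonneg x) ht
  positivity

lemma K_neg (x : ℝ) : K (-x) = K x := by unfold K; rw [abs_neg]

lemma K_le {x : ℝ} (hx : 0 < x) : K x ≤ Real.exp (-x) / (2 * x) := by
  unfold K
  rw [abs_of_pos hx]
  have h1 : (∫ t in Set.Ioi x, Real.exp (-t) / t) ≤ ∫ t in Set.Ioi x, Real.exp (-t) * x⁻¹ := by
    apply setIntegral_mono_on (gInt hx)
    · have := (exp_neg_integrableOn_Ioi x (by norm_num : (0:ℝ) < 1))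
      simpa [IntegrableOn] using this.mul_const x⁻¹
    · exact measurableSet_Ioi
    · intro t ht
      rw [div_eq_mul_inv]
      exact mul_le_mul_of_nonneg_left (inv_anti₀ hx ht.le) (Real.exp_pos _).le
  have h2 : (∫ t in Set.Ioi x, Real.exp (-t) * x⁻¹) = Real.exp (-x) * x⁻¹ := by
    rw [integral_mul_const, integral_exp_neg_Ioi]
  calc (1/2) * ∫ t in Set.Ioi x, Real.exp (-t) / t ≤ (1/2) * (Real.exp (-x) * x⁻¹) := by
        rw [h2] at h1; linarith [h1]
    _ = Real.exp (-x) / (2 * x) := by rw [eq_div_iff (by positivity)]; field_simp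

lemma K_deriv {x : ℝ} (hx : 0 < x) :
    HasDerivAt K (-(Real.exp (-x) / (2 * x))) x := by
  set g : ℝ → ℝ := fun t => Real.exp (-t) / t with hg
  set c : ℝ := x / 2 with hc
  have hc0 : 0 < c := by positivity
  have hcx : c < x := by rw [hc]; linarith
  set E : ℝ → ℝ := fun y => ∫ t in Set.Ioi y, g t with hE
  have key : ∀ y ∈ Set.Ioi c, E y = E c - ∫ t in c..y, g t := by
    intro y hy
    have hy' : c ≤ y := le_of_lt hy
    have hsplit : (∫ t in Set.Ioi c, g t)
        = (∫ t in Set.Ioc c y, g t) + ∫ t in Set.Ioi y, g t := by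
      rw [← setIntegral_union (Set.Ioc_disjoint_Ioi le_rfl) measurableSet_Ioi
        ((gInt hc0).mono_set Set.Ioc_subset_Ioi_self) ((gInt hc0).mono_set
          (Set.Ioi_subset_Ioi hy')), Set.Ioc_union_Ioi_eq_Ioi hy']
    rw [intervalIntegral.integral_of_le hy']
    simp only [hE]
    linarith [hsplit]
  have hderiv2 : HasDerivAt (fun y => E c - ∫ t in c..y, g t) (-(g x)) x := by
    have hint : IntervalIntegrable g volume c x := by
      rw [intervalIntegrable_iff_integrableOn_Ioc_of_le hcx.le]
      exact (gInt hc0).mono_set Set.Ioc_subset_Ioi_self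
    have hmeas : StronglyMeasurableAtFilter g (nhds x) :=
      ⟨Set.Ioi c, Ioi_mem_nhds hcx,
        (gcontOn (fun t ht => (lt_trans hc0 ht).ne')).aestronglyMeasurable measurableSet_Ioi⟩
    have hcont : ContinuousAt g x :=
      ((Real.continuous_exp.comp continuous_neg).continuousAt).div continuousAt_id hx.ne'
    have := intervalIntegral.integral_hasDerivAt_right hint hmeas hcont
    have h := (hasDerivAt_const x (E c)).sub this
    simp only [zero_sub] at h
    exact h
  have hEd : HasDerivAt E (-(g x)) x := by
    apply HasDerivAt.congr_of_eventuallyEq hderiv2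
    filter_upwards [Ioi_mem_nhds hcx] with y hy using key y hy
  have hKd : HasDerivAt (fun y => (1/2 : ℝ) * E y) ((1/2) * -(g x)) x := hEd.const_mul _
  have heq : K =ᶠ[nhds x] fun y => (1/2 : ℝ) * E y := by
    filter_upwards [Ioi_mem_nhds hx] with y hy
    unfold K
    rw [abs_of_pos hy]
  have : HasDerivAt K ((1/2) * -(g x)) x := hKd.congr_of_eventuallyEq heq
  convert this using 1
  simp only [hg]
  field_simp

lemma K_le_log {a : ℝ} (ha : 0 < a) (ha1 : a ≤ 1) : K a ≤ -(Real.log a) / 2 + K 1 := by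
  have h1 : K a = (1/2) * (∫ t in Set.Ioc a 1, Real.exp (-t) / t) + K 1 := by
    unfold K
    rw [abs_of_pos ha, abs_of_pos one_pos]
    have : (∫ t in Set.Ioi a, Real.exp (-t) / t)
        = (∫ t in Set.Ioc a 1, Real.exp (-t) / t) + ∫ t in Set.Ioi 1, Real.exp (-t) / t := by
      rw [← setIntegral_union (Set.Ioc_disjoint_Ioi le_rfl) measurableSet_Ioi
        ((gInt ha).mono_set Set.Ioc_subset_Ioi_self) ((gInt ha).mono_set
          (Set.Ioi_subset_Ioi ha1)), Set.Ioc_union_Ioi_eq_Ioi ha1]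
    rw [this]; ring
  have h2 : (∫ t in Set.Ioc a 1, Real.exp (-t) / t) ≤ ∫ t in Set.Ioc a 1, t⁻¹ := by
    apply setIntegral_mono_on ((gInt ha).mono_set Set.Ioc_subset_Ioi_self)
    · rw [← intervalIntegrable_iff_integrableOn_Ioc_of_le ha1]
      apply intervalIntegral.intervalIntegrable_inv
      · intro t ht
        rw [Set.uIcc_of_le ha1] at ht
        exact (lt_of_lt_of_le ha ht.1).ne'
      · exact continuousOn_id
    · exact measurableSet_Ioc
    · intro t ht
      have ht0 : 0 < t := lt_of_lt_of_le ha ht.1.le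
      rw [div_eq_mul_inv]
      nth_rewrite 2 [← one_mul t⁻¹]
      apply mul_le_mul_of_nonneg_right _ (by positivity)
      calc Real.exp (-t) ≤ Real.exp 0 := Real.exp_le_exp.2 (by linarith)
        _ = 1 := Real.exp_zero
  have h3 : (∫ t in Set.Ioc a 1, t⁻¹) = -(Real.log a) := by
    rw [← intervalIntegral.integral_of_le ha1, integral_inv (by
      intro h
      rcases h with ⟨h1', h2'⟩
      simp [min_eq_left ha1] at h1'
      linarith)]
    rw [Real.log_div one_ne_zero ha.ne', Real.log_one]
    ring
  rw [h1]
  rw [h3] at h2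
  linarith

lemma tK_tendsto_zero : Tendsto (fun t : ℝ => t * K t) (nhdsWithin 0 (Set.Ioi 0)) (nhds 0) := by
  have hupper : ∀ᶠ t in nhdsWithin (0:ℝ) (Set.Ioi 0),
      t * K t ≤ -(Real.log t * t) / 2 + t * K 1 := by
    filter_upwards [Ioo_mem_nhdsGT_of_mem (by norm_num : (0:ℝ) ∈ Set.Ico 0 1)] with t ht
    have h := K_le_log ht.1 ht.2.le
    have := mul_le_mul_of_nonneg_left h ht.1.le
    calc t * K t ≤ t * (-(Real.log t)/2 + K 1) := this
      _ = -(Real.log t * t) / 2 + t * K 1 := by ring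
  have hlower : ∀ᶠ t in nhdsWithin (0:ℝ) (Set.Ioi 0), 0 ≤ t * K t := by
    filter_upwards [self_mem_nhdsWithin] with t ht
    exact mul_nonneg (le_of_lt ht) (K_nonneg t)
  have hB : Tendsto (fun t : ℝ => -(Real.log t * t) / 2 + t * K 1)
      (nhdsWithin 0 (Set.Ioi 0)) (nhds 0) := by
    have h1 : Tendsto (fun t : ℝ => Real.log t * t) (nhdsWithin 0 (Set.Ioi 0)) (nhds 0) := by
      have := tendsto_log_mul_rpow_nhdsGT_zero (r := 1) one_pos
      simpa using this
    have h2 : Tendsto (fun t : ℝ => t * K 1) (nhdsWithin 0 (Set.Ioi 0)) (nhds 0) := by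
      have : Tendsto (fun t : ℝ => t * K 1) (nhds 0) (nhds (0 * K 1)) :=
        (continuous_id.mul continuous_const).tendsto 0
      simpa using this.mono_left nhdsWithin_le_nhds
    simpa using ((h1.neg.div_const 2).add h2)
  exact squeeze_zero' hlower hupper hB

lemma t2K_tendsto_zero :
    Tendsto (fun t : ℝ => t^2 * K t / 2) (nhdsWithin 0 (Set.Ioi 0)) (nhds 0) := by
  have hupper : ∀ᶠ t in nhdsWithin (0:ℝ) (Set.Ioi 0), t^2 * K t / 2 ≤ t * K t := by
    filter_upwards [Ioo_mem_nhdsGT_of_mem (by norm_num : (0:ℝ) ∈ Set.Ico 0 1)] with t ht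
    have h1 : t^2 ≤ t := by nlinarith [ht.1, ht.2]
    nlinarith [K_nonneg t, ht.1]
  have hlower : ∀ᶠ t in nhdsWithin (0:ℝ) (Set.Ioi 0), 0 ≤ t^2 * K t / 2 := by
    filter_upwards [self_mem_nhdsWithin] with t ht
    have := K_nonneg t; positivity
  exact squeeze_zero' hlower hupper tK_tendsto_zero

lemma tK_atTop : Tendsto (fun t : ℝ => t * K t) atTop (nhds 0) := by
  have hupper : ∀ᶠ t in atTop, t * K t ≤ Real.exp (-t) / 2 := by
    filter_upwards [eventually_gt_atTop 0] with t ht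
    have := K_le ht
    calc t * K t ≤ t * (Real.exp (-t) / (2*t)) := mul_le_mul_of_nonneg_left this ht.le
      _ = Real.exp (-t) / 2 := by field_simp
  have hlower : ∀ᶠ t in atTop, 0 ≤ t * K t := by
    filter_upwards [eventually_ge_atTop 0] with t ht
    exact mul_nonneg ht (K_nonneg t)
  refine squeeze_zero' hlower hupper ?_
  have := Real.tendsto_exp_neg_atTop_nhds_zero
  simpa using this.div_const 2

lemma t2K_atTop : Tendsto (fun t : ℝ => t^2 * K t / 2) atTop (nhds 0) := by
  have hupper : ∀ᶠ t in atTop, t^2 * K t / 2 ≤ t * Real.exp (-t) := by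
    filter_upwards [eventually_gt_atTop 0] with t ht
    have := K_le ht
    have h2 : t^2 * K t ≤ t^2 * (Real.exp (-t)/(2*t)) := mul_le_mul_of_nonneg_left this (by positivity)
    have h3 : t^2 * (Real.exp (-t)/(2*t)) = t * Real.exp (-t) / 2 := by field_simp
    rw [h3] at h2
    nlinarith [Real.exp_pos (-t), ht]
  have hlower : ∀ᶠ t in atTop, 0 ≤ t^2 * K t / 2 := by
    filter_upwards with t
    have := K_nonneg t; positivity
  refine squeeze_zero' hlower hupper ?_
  have := Real.tendsto_pow_mul_exp_neg_atTop_nhds_zero 1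
  simpa using this

lemma exp_neg_hasDerivAt (t : ℝ) :
    HasDerivAt (fun s : ℝ => Real.exp (-s)) (-Real.exp (-t)) t := by
  have h := (Real.hasDerivAt_exp (-t)).comp t (hasDerivAt_neg t)
  simp only [mul_neg, mul_one] at h
  exact h

noncomputable def H (t : ℝ) : ℝ := t * K t - Real.exp (-t) / 2

noncomputable def H2 (t : ℝ) : ℝ := t^2 * K t / 2 - (t+1) * Real.exp (-t) / 4

lemma H_deriv {t : ℝ} (ht : 0 < t) : HasDerivAt H (K t) t := by
  have h1 : HasDerivAt (fun s : ℝ => s * K s)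
      (1 * K t + t * -(Real.exp (-t) / (2 * t))) t :=
    (hasDerivAt_id t).mul (K_deriv ht)
  have h2 : HasDerivAt (fun s : ℝ => Real.exp (-s) / 2) (-Real.exp (-t) / 2) t :=
    (exp_neg_hasDerivAt t).div_const 2
  have := h1.sub h2
  refine this.congr_deriv ?_
  field_simp
  ring

lemma H2_deriv {t : ℝ} (ht : 0 < t) : HasDerivAt H2 (t * K t) t := by
  have h1 : HasDerivAt (fun s : ℝ => s^2 * K s)
      ((2:ℕ) * t ^ 1 * K t + t^2 * -(Real.exp (-t) / (2 * t))) t :=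
    (hasDerivAt_pow 2 t).mul (K_deriv ht)
  have h2 : HasDerivAt (fun s : ℝ => (s+1) * Real.exp (-s))
      (1 * Real.exp (-t) + (t+1) * -Real.exp (-t)) t :=
    ((hasDerivAt_id t).add_const 1).mul (exp_neg_hasDerivAt t)
  have := (h1.div_const 2).sub (h2.div_const 4)
  refine this.congr_deriv ?_
  field_simp
  ring

lemma H_tendsto_atTop : Tendsto H atTop (nhds 0) := by
  have h2 : Tendsto (fun t : ℝ => Real.exp (-t) / 2) atTop (nhds 0) := by
    simpa using Real.tendsto_exp_neg_atTop_nhds_zero.div_const 2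
  have h := tK_atTop.sub h2
  simp at h ⊢
  exact h

lemma H2_tendsto_atTop : Tendsto H2 atTop (nhds 0) := by
  have h2 : Tendsto (fun t : ℝ => (t+1) * Real.exp (-t) / 4) atTop (nhds 0) := by
    have ha : Tendsto (fun t : ℝ => t * Real.exp (-t)) atTop (nhds 0) := by
      simpa using Real.tendsto_pow_mul_exp_neg_atTop_nhds_zero 1
    have hb : Tendsto (fun t : ℝ => (t+1) * Real.exp (-t)) atTop (nhds 0) := by
      have := ha.add Real.tendsto_exp_neg_atTop_nhds_zero
      simpa [add_mul] using this
    simpa using hb.div_const 4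
  have h := t2K_atTop.sub h2
  simp at h ⊢
  exact h

lemma H_cont {a : ℝ} (ha : 0 ≤ a) : ContinuousWithinAt H (Set.Ici a) a := by
  rcases eq_or_lt_of_le ha with h | h
  · subst h
    rw [← Set.Ioi_insert, ContinuousWithinAt, nhdsWithin_insert, tendsto_sup]
    constructor
    · exact tendsto_pure_nhds H 0
    · have hH0 : H 0 = -(1/2) := by simp [H]
      rw [hH0]
      have h2 : Tendsto (fun t : ℝ => Real.exp (-t) / 2) (nhdsWithin 0 (Set.Ioi 0))
          (nhds (1/2)) := by
        have : Tendsto (fun t : ℝ => Real.exp (-t) / 2) (nhds 0) (nhds (1/2)) := by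
          have := ((Real.continuous_exp.comp continuous_neg).div_const 2).tendsto 0
          simpa using this
        exact this.mono_left nhdsWithin_le_nhds
      have := tK_tendsto_zero.sub h2
      simp at this ⊢
      exact this
  · exact (H_deriv h).continuousAt.continuousWithinAt

lemma H2_cont {a : ℝ} (ha : 0 ≤ a) : ContinuousWithinAt H2 (Set.Ici a) a := by
  rcases eq_or_lt_of_le ha with h | h
  · subst h
    rw [← Set.Ioi_insert, ContinuousWithinAt, nhdsWithin_insert, tendsto_sup]
    constructor
    · exact tendsto_pure_nhds H2 0
    · have hH0 : H2 0 = -(1/4) := by simp [H2]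
      rw [hH0]
      have h2 : Tendsto (fun t : ℝ => (t+1) * Real.exp (-t) / 4) (nhdsWithin 0 (Set.Ioi 0))
          (nhds (1/4)) := by
        have : Tendsto (fun t : ℝ => (t+1) * Real.exp (-t) / 4) (nhds 0) (nhds (1/4)) := by
          have hc : Continuous (fun t : ℝ => (t+1) * Real.exp (-t) / 4) := by continuity
          have := hc.tendsto 0
          simpa using this
        exact this.mono_left nhdsWithin_le_nhds
      have := t2K_tendsto_zero.sub h2
      simp at this ⊢
      exact this
  · exact (H2_deriv h).continuousAt.continuousWithinAt

lemma intK {x : ℝ} (hx : 0 ≤ x) :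
    IntegrableOn K (Set.Ioi x) ∧ (∫ t in Set.Ioi x, K t) = Real.exp (-x) / 2 - x * K x := by
  have hderiv : ∀ t ∈ Set.Ioi x, HasDerivAt H (K t) t := fun t ht => H_deriv (lt_of_le_of_lt hx ht)
  have hpos : ∀ t ∈ Set.Ioi x, 0 ≤ K t := fun t _ => K_nonneg t
  constructor
  · exact integrableOn_Ioi_deriv_of_nonneg (H_cont hx) hderiv hpos H_tendsto_atTop
  · have := integral_Ioi_of_hasDerivAt_of_nonneg (H_cont hx) hderiv hpos H_tendsto_atTop
    rw [this]
    simp [H]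

lemma inttK {x : ℝ} (hx : 0 ≤ x) :
    IntegrableOn (fun t => t * K t) (Set.Ioi x) ∧
      (∫ t in Set.Ioi x, t * K t) = (x+1) * Real.exp (-x) / 4 - x^2 * K x / 2 := by
  have hderiv : ∀ t ∈ Set.Ioi x, HasDerivAt H2 (t * K t) t :=
    fun t ht => H2_deriv (lt_of_le_of_lt hx ht)
  have hpos : ∀ t ∈ Set.Ioi x, 0 ≤ t * K t :=
    fun t ht => mul_nonneg (le_trans hx (le_of_lt ht)) (K_nonneg t)
  constructor
  · exact integrableOn_Ioi_deriv_of_nonneg (H2_cont hx) hderiv hpos H2_tendsto_atTop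
  · have := integral_Ioi_of_hasDerivAt_of_nonneg (H2_cont hx) hderiv hpos H2_tendsto_atTop
    rw [this]
    simp [H2]

lemma K_lower {t : ℝ} (ht : 0 < t) : Real.exp (-t) / (2 * (1 + t)) ≤ K t := by
  set ψ : ℝ → ℝ := fun s => Real.exp (-s) * (2 + s) / (2 * (1 + s)^2) with hψ
  set G : ℝ → ℝ := fun s => -(Real.exp (-s) / (2 * (1 + s))) with hG
  have hderiv : ∀ s, 0 < s → HasDerivAt G (ψ s) s := by
    intro s hs0
    have hden : HasDerivAt (fun u : ℝ => 2 * (1 + u)) (2 * 1) s :=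
      ((hasDerivAt_id s).const_add 1).const_mul 2
    have hne : 2 * (1 + s) ≠ 0 := by positivity
    have := ((exp_neg_hasDerivAt s).div hden hne).neg
    refine this.congr_deriv ?_
    rw [hψ]
    field_simp
    ring
  have hpos : ∀ s ∈ Set.Ioi t, 0 ≤ ψ s := by
    intro s hs
    have hs0 : 0 < s := lt_trans ht hs
    rw [hψ]
    positivity
  have htend : Tendsto G atTop (nhds 0) := by
    have h1 : Tendsto (fun s : ℝ => Real.exp (-s) / (2 * (1 + s))) atTop (nhds 0) := by
      apply squeeze_zero' (g := fun s : ℝ => Real.exp (-s) / 2)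
      · filter_upwards [eventually_gt_atTop 0] with s hs
        positivity
      · filter_upwards [eventually_gt_atTop 0] with s hs
        apply div_le_div_of_nonneg_left (Real.exp_pos _).le (by norm_num) (by nlinarith)
      · simpa using Real.tendsto_exp_neg_atTop_nhds_zero.div_const 2
    simpa [hG] using h1.neg
  have hval : (∫ s in Set.Ioi t, ψ s) = Real.exp (-t) / (2 * (1 + t)) := by
    have := integral_Ioi_of_hasDerivAt_of_nonneg
      ((hderiv t ht).continuousAt.continuousWithinAt)
      (fun s hs => hderiv s (lt_trans ht hs)) hpos htend
    rw [this, hG]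
    ring
  have hint : IntegrableOn ψ (Set.Ioi t) := integrableOn_Ioi_deriv_of_nonneg
      ((hderiv t ht).continuousAt.continuousWithinAt)
      (fun s hs => hderiv s (lt_trans ht hs)) hpos htend
  have hmono : (∫ s in Set.Ioi t, ψ s) ≤ ∫ s in Set.Ioi t, (1/2) * (Real.exp (-s) / s) := by
    apply setIntegral_mono_on hint ((gInt ht).const_mul _) measurableSet_Ioi
    intro s hs
    have hs0 : 0 < s := lt_trans ht hs
    rw [hψ]
    rw [div_le_iff₀ (by positivity), mul_comm ((1:ℝ)/2) _]
    have key : s * (2 + s) ≤ (1+s)^2 := by nlinarith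
    calc Real.exp (-s) * (2 + s) = (Real.exp (-s) / s) * (s * (2+s)) := by field_simp
      _ ≤ (Real.exp (-s) / s) * (1+s)^2 := by
          apply mul_le_mul_of_nonneg_left key (by positivity)
      _ = Real.exp (-s) / s * (1/2) * (2 * (1+s)^2) := by ring
  have hK : K t = ∫ s in Set.Ioi t, (1/2) * (Real.exp (-s) / s) := by
    unfold K
    rw [abs_of_pos ht, integral_const_mul]
  rw [hK, ← hval]
  exact hmono

lemma F_nonneg {x : ℝ} (hx : 0 ≤ x) :
    0 ≤ Real.exp (-x) / 4 * (1 + x) - x / 2 * K x * (2 + x) := by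
  rcases eq_or_lt_of_le hx with h | hx0
  · subst h
    norm_num
  · have h1 := (intK hx0.le).2
    have h2 := (inttK hx0.le).2
    have key : (∫ t in Set.Ioi x, (K t + t * K t)) ≥ ∫ t in Set.Ioi x, Real.exp (-t) / 2 := by
      apply setIntegral_mono_on
      · have := (exp_neg_integrableOn_Ioi x (by norm_num : (0:ℝ) < 1))
        simpa [IntegrableOn] using this.div_const 2
      · exact (intK hx0.le).1.add (inttK hx0.le).1
      · exact measurableSet_Ioi
      · intro t htm
        have ht0 : 0 < t := lt_trans hx0 htm
        have := K_lower ht0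
        have h3 : K t + t * K t = (1 + t) * K t := by ring
        rw [h3]
        calc Real.exp (-t) / 2 = (1+t) * (Real.exp (-t) / (2 * (1+t))) := by
              rw [mul_div_assoc']
              rw [eq_div_iff (by positivity)]
              ring
          _ ≤ (1+t) * K t := by
              apply mul_le_mul_of_nonneg_left this (by linarith)
    have hsum : (∫ t in Set.Ioi x, (K t + t * K t))
        = (Real.exp (-x) / 2 - x * K x) + ((x+1) * Real.exp (-x) / 4 - x^2 * K x / 2) := by
      rw [integral_add (intK hx0.le).1 (inttK hx0.le).1, h1, h2]
    have hexp : (∫ t in Set.Ioi x, Real.exp (-t) / 2) = Real.exp (-x) / 2 := by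
      have := (integral_exp_neg_Ioi x)
      rw [← this, ← integral_div]
    rw [hsum, hexp] at key
    nlinarith [key]

lemma main_identity {x : ℝ} (hx : 0 ≤ x) :
    (∫ y in Set.Ioi (0:ℝ), K (x - y) * (1 + y))
      = (1 + x) - (Real.exp (-x) / 4 * (1 + x) - x / 2 * K x * (2 + x)) := by
  set e := Real.exp (-x) with he
  set h : ℝ → ℝ := fun s => K s * (1 + x - s) with hh
  set q : ℝ → ℝ := fun u => K u * (1 + x + u) with hq
  -- basic integrabilities
  have hqint : IntegrableOn q (Set.Ioi 0) := by
    have : IntegrableOn (fun u => (1 + x) * K u + u * K u) (Set.Ioi 0) :=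
      ((intK le_rfl).1.const_mul _).add (inttK le_rfl).1
    apply this.congr_fun _ measurableSet_Ioi
    intro u _
    simp only [hq]; ring
  have hqIci : IntegrableOn q (Set.Ici 0) := by
    rwa [integrableOn_Ici_iff_integrableOn_Ioi]
  have hqval : (∫ u in Set.Ioi (0:ℝ), q u) = (1 + x) * (1/2) + 1/4 := by
    have hsum : (∫ u in Set.Ioi (0:ℝ), q u)
        = (∫ u in Set.Ioi (0:ℝ), (1 + x) * K u) + ∫ u in Set.Ioi (0:ℝ), u * K u := by
      rw [← integral_add ((intK le_rfl).1.const_mul _) (inttK le_rfl).1]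
      apply setIntegral_congr_fun measurableSet_Ioi
      intro u _
      simp only [hq]; ring
    rw [hsum, integral_const_mul, (intK le_rfl).2, (inttK le_rfl).2]
    norm_num
  -- h integrable on Iic 0
  have hq_neg : ∀ s : ℝ, q (-s) = h s := by
    intro s
    simp only [hq, hh, K_neg]
    ring
  have hhIic : IntegrableOn h (Set.Iic 0) := by
    have hemb : MeasurableEmbedding (fun s : ℝ => -s) :=
      (Homeomorph.neg ℝ).measurableEmbedding
    have := (MeasurePreserving.integrableOn_comp_preimage
      (Measure.measurePreserving_neg (volume : Measure ℝ)) hemb (f := q)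
      (s := Set.Ici 0)).2 hqIci
    have hpre : (fun s : ℝ => -s) ⁻¹' (Set.Ici 0) = Set.Iic 0 := by
      ext s; simp
    rw [hpre] at this
    apply this.congr_fun _ measurableSet_Iic
    intro s _
    exact hq_neg s
  have hhIocint : IntegrableOn h (Set.Ioc 0 x) := by
    have : IntegrableOn (fun s => (1 + x) * K s + (-1) * (s * K s)) (Set.Ioc 0 x) := by
      apply Integrable.add
      · exact ((intK le_rfl).1.mono_set Set.Ioc_subset_Ioi_self).const_mul _
      · exact ((inttK le_rfl).1.mono_set Set.Ioc_subset_Ioi_self).const_mul _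
    apply this.congr_fun _ measurableSet_Ioc
    intro s _
    simp only [hh]; ring
  -- value on Iic 0
  have hIicval : (∫ s in Set.Iic (0:ℝ), h s) = (1 + x) * (1/2) + 1/4 := by
    have h1 : (∫ s in Set.Iic (0:ℝ), q (-s)) = ∫ u in Set.Ioi (-(0:ℝ)), q u :=
      integral_comp_neg_Iic 0 q
    rw [show (∫ s in Set.Iic (0:ℝ), h s) = ∫ s in Set.Iic (0:ℝ), q (-s) by
      apply setIntegral_congr_fun measurableSet_Iic; intro s _; exact (hq_neg s).symm]
    rw [h1]
    norm_num [hqval]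
  -- value on Ioc 0 x
  have hKIoc : (∫ s in Set.Ioc (0:ℝ) x, K s) = 1/2 - (e / 2 - x * K x) := by
    have hsplit : (∫ s in Set.Ioi (0:ℝ), K s)
        = (∫ s in Set.Ioc (0:ℝ) x, K s) + ∫ s in Set.Ioi x, K s := by
      rw [← setIntegral_union (Set.Ioc_disjoint_Ioi le_rfl) measurableSet_Ioi
        ((intK le_rfl).1.mono_set Set.Ioc_subset_Ioi_self)
        ((intK le_rfl).1.mono_set (Set.Ioi_subset_Ioi hx)), Set.Ioc_union_Ioi_eq_Ioi hx]
    have h1 := (intK le_rfl).2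
    have h2 := (intK hx).2
    rw [h1, h2] at hsplit
    norm_num at hsplit ⊢
    linarith
  have htKIoc : (∫ s in Set.Ioc (0:ℝ) x, s * K s)
      = 1/4 - ((x+1) * e / 4 - x^2 * K x / 2) := by
    have hsplit : (∫ s in Set.Ioi (0:ℝ), s * K s)
        = (∫ s in Set.Ioc (0:ℝ) x, s * K s) + ∫ s in Set.Ioi x, s * K s := by
      rw [← setIntegral_union (Set.Ioc_disjoint_Ioi le_rfl) measurableSet_Ioi
        ((inttK le_rfl).1.mono_set Set.Ioc_subset_Ioi_self)
        ((inttK le_rfl).1.mono_set (Set.Ioi_subset_Ioi hx)), Set.Ioc_union_Ioi_eq_Ioi hx]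
    have h1 := (inttK le_rfl).2
    have h2 := (inttK hx).2
    rw [h1, h2] at hsplit
    norm_num at hsplit ⊢
    linarith
  have hIocval : (∫ s in Set.Ioc (0:ℝ) x, h s)
      = (1 + x) * (1/2 - (e / 2 - x * K x)) - (1/4 - ((x+1) * e / 4 - x^2 * K x / 2)) := by
    have hsum : (∫ s in Set.Ioc (0:ℝ) x, h s)
        = (∫ s in Set.Ioc (0:ℝ) x, (1 + x) * K s)
          - ∫ s in Set.Ioc (0:ℝ) x, s * K s := by
      rw [← integral_sub (((intK le_rfl).1.mono_set Set.Ioc_subset_Ioi_self).const_mul _)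
        ((inttK le_rfl).1.mono_set Set.Ioc_subset_Ioi_self)]
      apply setIntegral_congr_fun measurableSet_Ioc
      intro s _
      simp only [hh]; ring
    rw [hsum, integral_const_mul, hKIoc, htKIoc]
  -- main substitution chain
  have step1 : (∫ y in Set.Ioi (0:ℝ), K (x - y) * (1 + y))
      = ∫ t in Set.Iic (0:ℝ), K (x + t) * (1 - t) := by
    have := integral_comp_neg_Ioi (0:ℝ) (fun t => K (x + t) * (1 - t))
    rw [show (∫ y in Set.Ioi (0:ℝ), K (x - y) * (1 + y))
        = ∫ y in Set.Ioi (0:ℝ), K (x + (-y)) * (1 - (-y)) by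
      apply setIntegral_congr_fun measurableSet_Ioi
      intro y _
      simp only []
      rw [← sub_eq_add_neg, sub_neg_eq_add]]
    rw [this]
    norm_num
  have step2 : (∫ t in Set.Iic (0:ℝ), K (x + t) * (1 - t)) = ∫ s in Set.Iic x, h s := by
    have hmp : MeasurePreserving (fun t : ℝ => t + x) volume volume :=
      measurePreserving_add_right volume x
    have hemb : MeasurableEmbedding (fun t : ℝ => t + x) :=
      (Homeomorph.addRight x).measurableEmbedding
    have := hmp.setIntegral_preimage_emb hemb h (Set.Iic x)
    have hpre : (fun t : ℝ => t + x) ⁻¹' (Set.Iic x) = Set.Iic 0 := by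
      ext t; simp
    rw [hpre] at this
    rw [← this]
    apply setIntegral_congr_fun measurableSet_Iic
    intro t _
    simp only [hh]
    rw [add_comm t x]
    ring_nf
  have step3 : (∫ s in Set.Iic x, h s)
      = (∫ s in Set.Iic (0:ℝ), h s) + ∫ s in Set.Ioc (0:ℝ) x, h s := by
    rw [← setIntegral_union (Set.Iic_disjoint_Ioc le_rfl) measurableSet_Ioc hhIic hhIocint,
      Set.Iic_union_Ioc_eq_Iic hx]
  rw [step1, step2, step3, hIicval, hIocval]
  ring

theorem supersol_affine (x : ℝ) (hx : 0 ≤ x) :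
    (1 + x) - (∫ y in Set.Ioi (0:ℝ), K (x - y) * (1 + y)) =
        Real.exp (-x) / 4 * (1 + x) - x / 2 * K x * (2 + x) ∧
      0 ≤ Real.exp (-x) / 4 * (1 + x) - x / 2 * K x * (2 + x) := by
  refine ⟨?_, F_nonneg hx⟩
  rw [main_identity hx]
  ring
end

section
/- Let Ω ⊂ ℝ³ be open and bounded, ε > 0, and K_ε(z) = e^{-|z|/ε}/(4πε|z|²). Suppose v ∈ C(closure of Ω) is bounded and satisfies v(x) - ∫_Ω K_ε(η - x) v(η) dη ≥ 0 for all x ∈ Ω. Then v ≥ 0 on Ω. -/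
open MeasureTheory Real

namespace MaxPrinAux

open Metric Set

noncomputable def Kf (ε : ℝ) (r : ℝ) : ℝ := Real.exp (-r / ε) / (4 * π * ε * r ^ 2)

lemma Kf_nonneg {ε : ℝ} (hε : 0 < ε) (r : ℝ) : 0 ≤ Kf ε r := by
  unfold Kf
  have : (0:ℝ) ≤ 4 * π * ε * r ^ 2 := by positivity
  exact div_nonneg (Real.exp_nonneg _) this

lemma Kf_measurable (ε : ℝ) : Measurable (Kf ε) := by
  unfold Kf
  fun_prop

/-- the 3-dimensional Euclidean space -/
abbrev E3 : Type := EuclideanSpace ℝ (Fin 3)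

lemma volume_unit_ball : (volume (ball (0 : E3) 1)).toReal = 4 * π / 3 := by
  rw [EuclideanSpace.volume_ball]
  have hcard : (Fintype.card (Fin 3)) = 3 := by simp
  rw [hcard]
  have hg : Real.Gamma ((3:ℕ) / 2 + 1) = 3 / 4 * √π := by
    have h1 : ((3:ℕ) : ℝ) / 2 + 1 = (1/2 + 1) + 1 := by norm_num
    rw [h1, Real.Gamma_add_one (by norm_num), Real.Gamma_add_one (by norm_num),
      Real.Gamma_one_half_eq]
    ring
  rw [hg]
  have hπ : (0:ℝ) < π := Real.pi_pos
  have h2 : √π ^ 3 / (3 / 4 * √π) = 4 * π / 3 := by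
    have hs : √π ^ 2 = π := Real.sq_sqrt hπ.le
    have hs' : (0:ℝ) < √π := Real.sqrt_pos.mpr hπ
    field_simp [pow_succ]
    nlinarith [hs, hs']
  rw [h2]
  simp [ENNReal.toReal_ofReal (by positivity : (0:ℝ) ≤ 4 * π / 3)]

lemma oneD {ε : ℝ} (hε : 0 < ε) {a b : ℝ} (ha : 0 ≤ a) (hab : a ≤ b) :
    ∫ y in Set.Ioi (0:ℝ), y ^ 2 • Set.indicator (Set.Ioc a b) (Kf ε) y
      = (Real.exp (-a / ε) - Real.exp (-b / ε)) / (4 * π) := by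
  have h1 : ∀ y ∈ Set.Ioi (0:ℝ), y ^ 2 • Set.indicator (Set.Ioc a b) (Kf ε) y
      = Set.indicator (Set.Ioc a b) (fun y => Real.exp (-y / ε) / (4 * π * ε)) y := by
    intro y hy
    by_cases hmem : y ∈ Set.Ioc a b
    · rw [Set.indicator_of_mem hmem, Set.indicator_of_mem hmem]
      have hy0 : (0:ℝ) < y := hy
      unfold Kf
      have : 4 * π * ε * y ^ 2 ≠ 0 := by positivity
      rw [smul_eq_mul]
      field_simp
    · rw [Set.indicator_of_notMem hmem, Set.indicator_of_notMem hmem, smul_zero]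
  rw [setIntegral_congr_fun measurableSet_Ioi h1, setIntegral_indicator measurableSet_Ioc]
  have h2 : Set.Ioi (0:ℝ) ∩ Set.Ioc a b = Set.Ioc a b := by
    apply Set.inter_eq_self_of_subset_right
    intro y hy
    exact lt_of_le_of_lt ha hy.1
  rw [h2, ← intervalIntegral.integral_of_le hab]
  have h3 : ∀ x : ℝ, Real.exp (-x / ε) / (4 * π * ε)
      = (4 * π * ε)⁻¹ • Real.exp ((-ε⁻¹) * x) := by
    intro x
    rw [smul_eq_mul]
    ring_nf
  simp_rw [h3]
  rw [intervalIntegral.integral_smul, intervalIntegral.integral_comp_mul_left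
    (fun x => Real.exp x) (neg_ne_zero.mpr (inv_ne_zero hε.ne'))]
  rw [smul_eq_mul, smul_eq_mul, integral_exp]
  have hεne : ε ≠ 0 := hε.ne'
  have hπ : (0:ℝ) < π := Real.pi_pos
  field_simp
  ring_nf

/-- the annulus `a < ‖z‖ ≤ b` -/
def Ann (a b : ℝ) : Set E3 := {z : E3 | ‖z‖ ∈ Set.Ioc a b}

lemma Ann_eq (a b : ℝ) : Ann a b = closedBall (0 : E3) b \ closedBall 0 a := by
  ext z
  simp [Ann, mem_closedBall, dist_zero_right, and_comm]

lemma Ann_measurableSet (a b : ℝ) : MeasurableSet (Ann a b) := by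
  rw [Ann_eq]
  exact measurableSet_closedBall.diff measurableSet_closedBall

lemma indicator_Ann (ε a b : ℝ) (z : E3) :
    Set.indicator (Ann a b) (fun z : E3 => Kf ε ‖z‖) z
      = Set.indicator (Set.Ioc a b) (Kf ε) ‖z‖ := by
  by_cases h : z ∈ Ann a b
  · rw [Set.indicator_of_mem h, Set.indicator_of_mem (show ‖z‖ ∈ Set.Ioc a b from h)]
  · rw [Set.indicator_of_notMem h, Set.indicator_of_notMem (show ‖z‖ ∉ Set.Ioc a b from h)]

lemma setIntegral_Ann {ε : ℝ} (hε : 0 < ε) {a b : ℝ} (ha : 0 ≤ a) (hab : a ≤ b) :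
    ∫ z in Ann a b, Kf ε ‖z‖ = Real.exp (-a / ε) - Real.exp (-b / ε) := by
  rw [← integral_indicator (Ann_measurableSet a b)]
  have : ∀ z : E3, Set.indicator (Ann a b) (fun z : E3 => Kf ε ‖z‖) z
      = (fun r => Set.indicator (Set.Ioc a b) (Kf ε) r) ‖z‖ := indicator_Ann ε a b
  rw [show (fun z => Set.indicator (Ann a b) (fun z : E3 => Kf ε ‖z‖) z)
      = (fun z : E3 => (fun r => Set.indicator (Set.Ioc a b) (Kf ε) r) ‖z‖) from
    funext (indicator_Ann ε a b)]
  rw [integral_fun_norm_addHaar volume (fun r => Set.indicator (Set.Ioc a b) (Kf ε) r)]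
  rw [finrank_euclideanSpace_fin]
  rw [measureReal_def, volume_unit_ball, oneD hε ha hab]
  have hπ : (0:ℝ) < π := Real.pi_pos
  rw [smul_eq_mul, nsmul_eq_mul]
  field_simp
  ring

lemma integrableOn_Ann {ε : ℝ} (hε : 0 < ε) {a b : ℝ} (ha : 0 < a) :
    IntegrableOn (fun z : E3 => Kf ε ‖z‖) (Ann a b) := by
  have hsub : Ann a b ⊆ closedBall (0 : E3) b \ ball 0 a := by
    rw [Ann_eq]
    intro z hz
    exact ⟨hz.1, fun h => absurd (mem_closedBall.mpr (le_of_lt (mem_ball.mp h)))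
      (fun h' => hz.2 h')⟩
  apply IntegrableOn.mono_set _ hsub
  have hcomp : IsCompact (closedBall (0 : E3) b \ ball 0 a) :=
    (isCompact_closedBall _ _).diff isOpen_ball
  apply ContinuousOn.integrableOn_compact hcomp
  apply ContinuousOn.div
  · exact (Real.continuous_exp.comp ((continuous_norm.neg).div_const ε)).continuousOn
  · exact (continuous_const.mul ((continuous_norm.pow 2))).continuousOn
  · intro z hz
    have hz0 : a ≤ ‖z‖ := by
      by_contra h
      push_neg at h
      exact hz.2 (mem_ball.mpr (by simpa [dist_zero_right] using h))
    have : 0 < ‖z‖ := lt_of_lt_of_le ha hz0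
    positivity

lemma setIntegral_Ann_le_one {ε : ℝ} (hε : 0 < ε) {a b : ℝ} (ha : 0 ≤ a) :
    ∫ z in Ann a b, Kf ε ‖z‖ ≤ 1 := by
  rcases le_or_gt a b with hab | hab
  · rw [setIntegral_Ann hε ha hab]
    have h1 : Real.exp (-a / ε) ≤ 1 := by
      apply Real.exp_le_one_iff.mpr
      have : 0 ≤ a / ε := div_nonneg ha hε.le
      simpa [neg_div] using neg_nonpos.mpr this
    have h2 : 0 ≤ Real.exp (-b / ε) := Real.exp_nonneg _
    linarith
  · have : Ann a b = ∅ := by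
      rw [Ann_eq]
      have : closedBall (0 : E3) b ⊆ closedBall 0 a :=
        closedBall_subset_closedBall hab.le
      rw [Set.diff_eq_empty.mpr this]
    rw [this]
    simp

lemma integrableOn_Ann' {ε : ℝ} (hε : 0 < ε) {a b : ℝ} (ha : 0 < a) :
    IntegrableOn (fun z : E3 => Kf ε ‖z‖) (Ann a b) := integrableOn_Ann hε ha

lemma integrableOn_closedBall {ε : ℝ} (hε : 0 < ε) (b : ℝ) :
    IntegrableOn (fun z : E3 => Kf ε ‖z‖) (closedBall (0 : E3) b) := by
  have hmeas : Measurable (fun z : E3 => Kf ε ‖z‖) := (Kf_measurable ε).comp measurable_norm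
  refine ⟨hmeas.aestronglyMeasurable.restrict, ?_⟩
  rw [hasFiniteIntegral_iff_ofReal (Filter.Eventually.of_forall fun z => Kf_nonneg hε _)]
  set F : ℕ → E3 → ENNReal := fun n =>
    Set.indicator (Ann (1 / (n + 1)) b) (fun z => ENNReal.ofReal (Kf ε ‖z‖)) with hF
  have hFmeas : ∀ n, Measurable (F n) := fun n =>
    ((ENNReal.measurable_ofReal.comp hmeas)).indicator (Ann_measurableSet _ _)
  have hFmono : Monotone F := by
    intro n m hnm
    apply Set.indicator_le_indicator_of_subset
    · intro z hz
      refine ⟨lt_of_le_of_lt ?_ hz.1, hz.2⟩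
      have h1 : (0:ℝ) < (n:ℝ) + 1 := by positivity
      apply div_le_div_of_nonneg_left (by norm_num) h1
      exact_mod_cast add_le_add_left (Nat.cast_le.mpr hnm) 1
    · intro z
      exact zero_le
  have key : ∫⁻ z in closedBall (0 : E3) b, ENNReal.ofReal (Kf ε ‖z‖) ≤ 1 := by
    rw [← lintegral_indicator measurableSet_closedBall]
    have hle : ∀ z : E3, Set.indicator (closedBall (0 : E3) b)
        (fun z => ENNReal.ofReal (Kf ε ‖z‖)) z ≤ ⨆ n, F n z := by
      intro z
      by_cases hz : z ∈ closedBall (0 : E3) b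
      · rw [Set.indicator_of_mem hz]
        by_cases hz0 : z = 0
        · subst hz0
          have : Kf ε ‖(0 : E3)‖ = 0 := by
            simp [Kf]
          rw [this]
          simp
        · have hzn : 0 < ‖z‖ := norm_pos_iff.mpr hz0
          obtain ⟨n, hn⟩ := exists_nat_one_div_lt hzn
          have hmem : z ∈ Ann (1 / (n + 1)) b := ⟨hn, mem_closedBall_zero_iff.mp hz⟩
          calc ENNReal.ofReal (Kf ε ‖z‖) = F n z := by
                rw [hF]
                simp only [Set.indicator_of_mem hmem]
            _ ≤ ⨆ n, F n z := le_iSup (fun n => F n z) n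
      · rw [Set.indicator_of_notMem hz]
        exact zero_le
    calc ∫⁻ z, Set.indicator (closedBall (0 : E3) b)
          (fun z => ENNReal.ofReal (Kf ε ‖z‖)) z
        ≤ ∫⁻ z, ⨆ n, F n z := lintegral_mono hle
      _ = ⨆ n, ∫⁻ z, F n z := lintegral_iSup hFmeas hFmono
      _ ≤ 1 := by
          apply iSup_le
          intro n
          rw [hF]
          simp only
          rw [lintegral_indicator (Ann_measurableSet _ _)]
          have hpos : (0:ℝ) < 1 / (n + 1) := by positivity
          rw [← ofReal_integral_eq_lintegral_ofReal (integrableOn_Ann hε hpos)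
            (Filter.Eventually.of_forall fun z => Kf_nonneg hε _)]
          calc ENNReal.ofReal (∫ z in Ann (1 / (n + 1)) b, Kf ε ‖z‖)
              ≤ ENNReal.ofReal 1 :=
                ENNReal.ofReal_le_ofReal (setIntegral_Ann_le_one hε hpos.le)
            _ = 1 := ENNReal.ofReal_one
  exact lt_of_le_of_lt key ENNReal.one_lt_top

lemma setIntegral_closedBall {ε : ℝ} (hε : 0 < ε) {b : ℝ} (hb : 0 ≤ b) :
    ∫ z in closedBall (0 : E3) b, Kf ε ‖z‖ = 1 - Real.exp (-b / ε) := by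
  have hae : closedBall (0 : E3) b =ᵐ[volume] Ann 0 b := by
    rw [Ann_eq]
    have h0 : closedBall (0 : E3) 0 = {0} := by
      ext z; simp
    rw [h0]
    exact (MeasureTheory.diff_ae_eq_self.mpr
      (measure_mono_null Set.inter_subset_right (measure_singleton 0))).symm
  rw [setIntegral_congr_set hae, setIntegral_Ann hε le_rfl hb]
  simp [Real.exp_zero, zero_div]

lemma shift_indicator (ε : ℝ) (x : E3) (b : ℝ) (η : E3) :
    Set.indicator (closedBall x b) (fun η : E3 => Kf ε ‖η - x‖) η
      = Set.indicator (closedBall (0 : E3) b) (fun z : E3 => Kf ε ‖z‖) (η - x) := by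
  have hmem : η ∈ closedBall x b ↔ η - x ∈ closedBall (0 : E3) b := by
    simp [mem_closedBall, dist_eq_norm]
  by_cases h : η ∈ closedBall x b
  · rw [Set.indicator_of_mem h, Set.indicator_of_mem (hmem.mp h)]
  · rw [Set.indicator_of_notMem h, Set.indicator_of_notMem (fun h' => h (hmem.mpr h'))]

lemma integrableOn_closedBall_shift {ε : ℝ} (hε : 0 < ε) (x : E3) (b : ℝ) :
    IntegrableOn (fun η : E3 => Kf ε ‖η - x‖) (closedBall x b) := by
  rw [← integrable_indicator_iff measurableSet_closedBall]
  have : Set.indicator (closedBall x b) (fun η : E3 => Kf ε ‖η - x‖)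
      = (Set.indicator (closedBall (0 : E3) b) (fun z : E3 => Kf ε ‖z‖)) ∘ (fun η => η - x) :=
    funext (shift_indicator ε x b)
  rw [this]
  rw [MeasurePreserving.integrable_comp_emb (measurePreserving_sub_right volume x)
    (MeasurableEquiv.subRight x).measurableEmbedding]
  rw [integrable_indicator_iff measurableSet_closedBall]
  exact integrableOn_closedBall hε b

lemma setIntegral_closedBall_shift {ε : ℝ} (hε : 0 < ε) (x : E3) {b : ℝ} (hb : 0 ≤ b) :
    ∫ η in closedBall x b, Kf ε ‖η - x‖ = 1 - Real.exp (-b / ε) := by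
  rw [← integral_indicator measurableSet_closedBall]
  rw [show (fun η => Set.indicator (closedBall x b) (fun η : E3 => Kf ε ‖η - x‖) η)
      = (fun η : E3 => (Set.indicator (closedBall (0 : E3) b)
        (fun z : E3 => Kf ε ‖z‖)) ((fun η : E3 => η - x) η)) from funext (shift_indicator ε x b)]
  rw [MeasurePreserving.integral_comp (measurePreserving_sub_right volume x)
    (MeasurableEquiv.subRight x).measurableEmbedding]
  rw [integral_indicator measurableSet_closedBall]
  exact setIntegral_closedBall hε hb

end MaxPrinAux

open MaxPrinAux in
theorem max_principle_Omega (Ω : Set (EuclideanSpace ℝ (Fin 3))) (hΩo : IsOpen Ω)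
    (hΩb : Bornology.IsBounded Ω) (ε : ℝ) (hε : 0 < ε)
    (v : EuclideanSpace ℝ (Fin 3) → ℝ)
    (hcont : ContinuousOn v (closure Ω))
    (hbdd : ∃ C : ℝ, ∀ x, |v x| ≤ C)
    (hsuper : ∀ x ∈ Ω, 0 ≤ v x -
      ∫ η in Ω, Real.exp (-‖η - x‖ / ε) / (4 * π * ε * ‖η - x‖^2) * v η) :
    ∀ x ∈ Ω, 0 ≤ v x := by
  intro x hx
  obtain ⟨R₀, hR₀⟩ := hΩb.subset_closedBall 0
  set R := max R₀ 1 with hR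
  have hRpos : (0:ℝ) < R := lt_of_lt_of_le one_pos (le_max_right _ _)
  have hΩR : Ω ⊆ Metric.closedBall 0 R :=
    hR₀.trans (Metric.closedBall_subset_closedBall (le_max_left _ _))
  have hcomp : IsCompact (closure Ω) := hΩb.isCompact_closure
  obtain ⟨z, hzc, hzmin⟩ := hcomp.exists_isMinOn ⟨x, subset_closure hx⟩ hcont
  set m := v z with hm
  by_contra hvx
  push_neg at hvx
  have hm0 : m < 0 := lt_of_le_of_lt (hzmin (subset_closure hx)) hvx
  set c₀ : ℝ := 1 - Real.exp (-(2*R) / ε) with hc₀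
  have hexp_pos : 0 < Real.exp (-(2*R)/ε) := Real.exp_pos _
  have hexp_le : Real.exp (-(2*R)/ε) ≤ 1 := by
    apply Real.exp_le_one_iff.mpr
    have h1 : (0:ℝ) ≤ 2*R/ε := by positivity
    rw [neg_div]
    linarith
  have hc₀nonneg : 0 ≤ c₀ := by rw [hc₀]; linarith
  have key : ∀ y ∈ Ω, m * c₀ ≤ v y := by
    intro y hy
    have hsub : Ω ⊆ Metric.closedBall y (2*R) := by
      intro w hw
      have h1 : ‖w‖ ≤ R := mem_closedBall_zero_iff.mp (hΩR hw)
      have h2 : ‖y‖ ≤ R := mem_closedBall_zero_iff.mp (hΩR hy)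
      rw [Metric.mem_closedBall, dist_eq_norm]
      calc ‖w - y‖ ≤ ‖w‖ + ‖y‖ := norm_sub_le _ _
        _ ≤ 2 * R := by linarith
    have hKi : IntegrableOn (fun η : E3 => Kf ε ‖η - y‖) Ω :=
      (integrableOn_closedBall_shift hε y (2*R)).mono_set hsub
    have hInt : ∫ η in Ω, Kf ε ‖η - y‖ ≤ c₀ := by
      rw [hc₀, ← setIntegral_closedBall_shift hε y (by positivity : (0:ℝ) ≤ 2*R)]
      exact setIntegral_mono_set (integrableOn_closedBall_shift hε y (2*R))
        (Filter.Eventually.of_forall fun η => Kf_nonneg hε _)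
        (HasSubset.Subset.eventuallyLE hsub)
    have hsup := hsuper y hy
    have hid : (∫ η in Ω, Real.exp (-‖η - y‖ / ε) / (4 * π * ε * ‖η - y‖^2) * v η)
        = ∫ η in Ω, Kf ε ‖η - y‖ * v η := rfl
    rw [hid] at hsup
    by_cases hcase : IntegrableOn (fun η : E3 => Kf ε ‖η - y‖ * v η) Ω
    · have hmono : ∫ η in Ω, Kf ε ‖η - y‖ * m ≤ ∫ η in Ω, Kf ε ‖η - y‖ * v η := by
        apply setIntegral_mono_on (hKi.mul_const m) hcase hΩo.measurableSet
        intro η hη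
        exact mul_le_mul_of_nonneg_left (hzmin (subset_closure hη)) (Kf_nonneg hε _)
      have h5 : ∫ η in Ω, Kf ε ‖η - y‖ * m = (∫ η in Ω, Kf ε ‖η - y‖) * m :=
        integral_mul_const m _
      have h6 : c₀ * m ≤ (∫ η in Ω, Kf ε ‖η - y‖) * m :=
        mul_le_mul_of_nonpos_right hInt hm0.le
      have h7 : m * c₀ = c₀ * m := mul_comm _ _
      linarith
    · have h8 : (∫ η in Ω, Kf ε ‖η - y‖ * v η) = 0 := integral_undef hcase
      have h9 : m * c₀ ≤ 0 := mul_nonpos_of_nonpos_of_nonneg hm0.le hc₀nonneg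
      linarith
  set δ := (-m) * Real.exp (-(2*R)/ε) with hδ
  have hδpos : 0 < δ := by
    apply mul_pos _ hexp_pos
    linarith
  have hneBot : (nhdsWithin z Ω).NeBot := mem_closure_iff_nhdsWithin_neBot.mp hzc
  have htend : Filter.Tendsto v (nhdsWithin z Ω) (nhds m) :=
    (hcont z hzc).mono subset_closure
  have hev : ∀ᶠ y in nhdsWithin z Ω, v y < m + δ :=
    htend (Iio_mem_nhds (by linarith : m < m + δ))
  have hev2 : ∀ᶠ y in nhdsWithin z Ω, y ∈ Ω := self_mem_nhdsWithin
  obtain ⟨y, hy1, hy2⟩ := (hev2.and hev).exists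
  have hkey := key y hy1
  have heq : m * c₀ = m + δ := by
    rw [hc₀, hδ]; ring
  linarith
end

section
/- Let α : ℝ³ → ℝ be continuous with 0 < c₀ ≤ α(x) ≤ c₁ for all x. For ε > 0 define K_ε(x;η) = α(η)·exp(-(1/ε)∫_0^{|x-η|} α(x - t·(x-η)/|x-η|) dt)/(4πε|x-η|²). Then for every x ∈ ℝ³, ∫_{ℝ³} K_ε(x;η) dη = 1. -/
open MeasureTheory Real Filter intervalIntegral

lemma radial_aux (α : EuclideanSpace ℝ (Fin 3) → ℝ) (hα : Continuous α)
    (c₀ : ℝ) (hc₀ : 0 < c₀) (hbound : ∀ y, c₀ ≤ α y)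
    (ε : ℝ) (hε : 0 < ε) (x n : EuclideanSpace ℝ (Fin 3)) :
    IntegrableOn (fun r => α (x - r • n) *
        Real.exp (-(1/ε) * ∫ t in (0:ℝ)..r, α (x - t • n))) (Set.Ioi 0) ∧
    (∫ r in Set.Ioi (0:ℝ), α (x - r • n) *
        Real.exp (-(1/ε) * ∫ t in (0:ℝ)..r, α (x - t • n))) = ε := by
  have hc : Continuous (fun t : ℝ => α (x - t • n)) := by fun_prop
  set A : ℝ → ℝ := fun r => ∫ t in (0:ℝ)..r, α (x - t • n) with hAdef
  set φ : ℝ → ℝ := fun r => -(ε * Real.exp (-(1/ε) * A r)) with hφdef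
  set ψ : ℝ → ℝ := fun r => α (x - r • n) * Real.exp (-(1/ε) * A r) with hψdef
  have hA : ∀ r : ℝ, HasDerivAt A (α (x - r • n)) r := fun r =>
    integral_hasDerivAt_right (hc.intervalIntegrable _ _)
      (hc.stronglyMeasurableAtFilter _ _) hc.continuousAt
  have hφ : ∀ r : ℝ, HasDerivAt φ (ψ r) r := by
    intro r
    have h1 : HasDerivAt (fun r => -(ε * Real.exp (-(1/ε) * A r)))
        (-(ε * (Real.exp (-(1/ε) * A r) * (-(1/ε) * α (x - r • n))))) r :=
      ((((hA r).const_mul (-(1/ε))).exp).const_mul ε).neg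
    convert h1 using 1
    field_simp [hψdef]
    simp only [hψdef]; ring_nf
  have hAlow : ∀ r : ℝ, 0 ≤ r → c₀ * r ≤ A r := by
    intro r hr
    have : (∫ t in (0:ℝ)..r, c₀) ≤ A r := by
      apply intervalIntegral.integral_mono_on hr (intervalIntegrable_const)
        (hc.intervalIntegrable _ _)
      intro t _
      exact hbound _
    simp only [intervalIntegral.integral_const, smul_eq_mul, sub_zero] at this
    linarith
  have hφ0 : Tendsto φ atTop (nhds 0) := by
    have hb : Tendsto (fun r : ℝ => ε * Real.exp (-(c₀/ε) * r)) atTop (nhds 0) := by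
      have h1 : Tendsto (fun r : ℝ => (c₀/ε) * r) atTop atTop :=
        Tendsto.const_mul_atTop (by positivity) tendsto_id
      have h2 : Tendsto (fun r : ℝ => Real.exp (-(c₀/ε) * r)) atTop (nhds 0) := by
        have h3 := Real.tendsto_exp_atBot.comp (tendsto_neg_atTop_atBot.comp h1)
        simpa [Function.comp_def, neg_mul] using h3
      simpa using h2.const_mul ε
    apply squeeze_zero_norm' _ hb
    filter_upwards [Filter.eventually_ge_atTop (0:ℝ)] with r hr
    have h1 : Real.exp (-(1/ε) * A r) ≤ Real.exp (-(c₀/ε) * r) := by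
      apply Real.exp_le_exp.2
      have := hAlow r hr
      rw [neg_mul, neg_mul, neg_le_neg_iff]
      calc c₀/ε * r = 1/ε * (c₀ * r) := by ring
        _ ≤ 1/ε * A r := by
            apply mul_le_mul_of_nonneg_left this (by positivity)
    have : |φ r| = ε * Real.exp (-(1/ε) * A r) := by
      rw [hφdef]; rw [abs_neg, abs_of_nonneg (by positivity)]
    rw [Real.norm_eq_abs, this]
    exact mul_le_mul_of_nonneg_left h1 hε.le
  have hψpos : ∀ r ∈ Set.Ioi (0:ℝ), 0 ≤ ψ r := by
    intro r _
    have := (hbound (x - r • n)).trans_lt' hc₀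
    positivity
  have hder : ∀ r ∈ Set.Ici (0:ℝ), HasDerivAt φ (ψ r) r := fun r _ => hφ r
  have hint : IntegrableOn ψ (Set.Ioi (0:ℝ)) :=
    integrableOn_Ioi_deriv_of_nonneg' hder hψpos hφ0
  have hval : (∫ r in Set.Ioi (0:ℝ), ψ r) = 0 - φ 0 :=
    integral_Ioi_of_hasDerivAt_of_nonneg' hder hψpos hφ0
  have hφ0' : φ 0 = -ε := by
    simp [hφdef, hAdef, intervalIntegral.integral_same]
  constructor
  · exact hint
  · rw [hval, hφ0']; ring
section
variable (α : EuclideanSpace ℝ (Fin 3) → ℝ) (x : EuclideanSpace ℝ (Fin 3)) (ε : ℝ)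

noncomputable def Sfun : EuclideanSpace ℝ (Fin 3) → ℝ :=
  fun y => ∫ s in (0:ℝ)..1, α (x - s • y)

noncomputable def Ffun : EuclideanSpace ℝ (Fin 3) → ℝ :=
  fun y => α (x - y) * Real.exp (-(1/ε) * (‖y‖ * Sfun α x y)) / (4 * π * ε * ‖y‖^2)
end

lemma Sfun_cont (α : EuclideanSpace ℝ (Fin 3) → ℝ) (hα : Continuous α)
    (x : EuclideanSpace ℝ (Fin 3)) : Continuous (Sfun α x) := by
  apply intervalIntegral.continuous_parametric_intervalIntegral_of_continuous'
  exact hα.comp (by fun_prop)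

lemma Ffun_meas (α : EuclideanSpace ℝ (Fin 3) → ℝ) (hα : Continuous α)
    (x : EuclideanSpace ℝ (Fin 3)) (ε : ℝ) : Measurable (Ffun α x ε) := by
  have h1 : Continuous (fun y : EuclideanSpace ℝ (Fin 3) =>
      α (x - y) * Real.exp (-(1/ε) * (‖y‖ * Sfun α x y))) := by
    have := Sfun_cont α hα x
    fun_prop
  have h2 : Continuous (fun y : EuclideanSpace ℝ (Fin 3) => 4 * π * ε * ‖y‖^2) := by fun_prop
  exact h1.measurable.div h2.measurable

lemma Ffun_nonneg (α : EuclideanSpace ℝ (Fin 3) → ℝ)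
    (c₀ : ℝ) (hc₀ : 0 < c₀) (hbound : ∀ y, c₀ ≤ α y)
    (x : EuclideanSpace ℝ (Fin 3)) (ε : ℝ) (hε : 0 < ε) (y : EuclideanSpace ℝ (Fin 3)) :
    0 ≤ Ffun α x ε y := by
  have h1 : 0 < α (x - y) := hc₀.trans_le (hbound _)
  have h2 : (0:ℝ) < Real.exp (-(1/ε) * (‖y‖ * Sfun α x y)) := Real.exp_pos _
  have h3 : (0:ℝ) ≤ 4 * π * ε * ‖y‖^2 := by positivity
  exact div_nonneg (by positivity) h3

lemma inner_lint (α : EuclideanSpace ℝ (Fin 3) → ℝ) (hα : Continuous α)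
    (c₀ : ℝ) (hc₀ : 0 < c₀) (hbound : ∀ y, c₀ ≤ α y)
    (ε : ℝ) (hε : 0 < ε) (x : EuclideanSpace ℝ (Fin 3))
    (n : EuclideanSpace ℝ (Fin 3)) (hn : ‖n‖ = 1) :
    ∫⁻ r : Set.Ioi (0:ℝ), ENNReal.ofReal (Ffun α x ε (r.1 • n)) ∂(Measure.volumeIoiPow 2)
      = ENNReal.ofReal (1/(4*π)) := by
  have hFmeas := Ffun_meas α hα x ε
  have hsm : Measurable (fun r : Set.Ioi (0:ℝ) => ENNReal.ofReal (Ffun α x ε (r.1 • n))) := by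
    apply Measurable.ennreal_ofReal
    exact hFmeas.comp ((measurable_subtype_coe).smul measurable_const)
  rw [Measure.volumeIoiPow,
    lintegral_withDensity_eq_lintegral_mul _ (by fun_prop) hsm]
  rw [show ((fun r : Set.Ioi (0:ℝ) => ENNReal.ofReal (r.1 ^ 2)) * fun r : Set.Ioi (0:ℝ) =>
        ENNReal.ofReal (Ffun α x ε (r.1 • n)))
      = fun r : Set.Ioi (0:ℝ) => ((fun s : ℝ => ENNReal.ofReal (s ^ 2) *
        ENNReal.ofReal (Ffun α x ε (s • n))) r.1) from rfl,
    lintegral_subtype_comap measurableSet_Ioi]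
  set ψ : ℝ → ℝ := fun r => α (x - r • n) *
      Real.exp (-(1/ε) * ∫ t in (0:ℝ)..r, α (x - t • n)) with hψdef
  have hstep : ∀ r ∈ Set.Ioi (0:ℝ),
      ENNReal.ofReal (r ^ 2) * ENNReal.ofReal (Ffun α x ε (r • n))
        = ENNReal.ofReal (ψ r / (4 * π * ε)) := by
    intro r hr
    have hr' : (0:ℝ) < r := hr
    have hnorm : ‖r • n‖ = r := by
      rw [norm_smul, hn, Real.norm_eq_abs, abs_of_pos hr', mul_one]
    have hSS : ‖r • n‖ * Sfun α x (r • n) = ∫ t in (0:ℝ)..r, α (x - t • n) := by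
      rw [hnorm, Sfun]
      have : ∀ s : ℝ, α (x - s • (r • n)) = α (x - (r * s) • n) := by
        intro s; rw [smul_smul, mul_comm]
      simp only [this]
      have := intervalIntegral.smul_integral_comp_mul_left
        (f := fun t : ℝ => α (x - t • n)) (a := (0:ℝ)) (b := (1:ℝ)) r
      simpa using this
    rw [← ENNReal.ofReal_mul (by positivity)]
    congr 1
    rw [Ffun, hSS, hnorm]
    field_simp
    simp only [hψdef]; ring_nf
  rw [setLIntegral_congr_fun measurableSet_Ioi (fun r hr => hstep r hr)]
  have hrad := radial_aux α hα c₀ hc₀ hbound ε hε x n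
  have hψint : IntegrableOn (fun r => ψ r / (4 * π * ε)) (Set.Ioi (0:ℝ)) :=
    hrad.1.div_const _
  have hψnn : 0 ≤ᵐ[volume.restrict (Set.Ioi (0:ℝ))] fun r => ψ r / (4 * π * ε) := by
    apply Filter.Eventually.of_forall
    intro r
    have h1 : 0 < α (x - r • n) := hc₀.trans_le (hbound _)
    have : 0 ≤ ψ r := by rw [hψdef]; positivity
    positivity
  rw [← ofReal_integral_eq_lintegral_ofReal hψint hψnn]
  rw [MeasureTheory.integral_div, hrad.2]
  congr 1
  field_simp

lemma ball_vol_3 : (volume : Measure (EuclideanSpace ℝ (Fin 3))) (Metric.ball 0 1)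
    = ENNReal.ofReal (4/3 * π) := by
  rw [EuclideanSpace.volume_ball]
  have hΓ : Real.Gamma ((Fintype.card (Fin 3) : ℝ)/2 + 1) = 3/4 * Real.sqrt π := by
    rw [Fintype.card_fin]
    push_cast
    rw [Real.Gamma_add_one (by norm_num)]
    have h32 : (3:ℝ)/2 = 1/2 + 1 := by norm_num
    rw [h32, Real.Gamma_add_one (by norm_num), Real.Gamma_one_half_eq]
    ring
  rw [hΓ, Fintype.card_fin]
  have hsq : Real.sqrt π ^ 3 = π * Real.sqrt π := by
    rw [pow_succ, Real.sq_sqrt pi_pos.le]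
  rw [hsq]
  have hne : Real.sqrt π ≠ 0 := ne_of_gt (Real.sqrt_pos.mpr pi_pos)
  rw [show π * Real.sqrt π / (3/4 * Real.sqrt π) = 4/3 * π by field_simp]
  simp

lemma lint_Ffun (α : EuclideanSpace ℝ (Fin 3) → ℝ) (hα : Continuous α)
    (c₀ : ℝ) (hc₀ : 0 < c₀) (hbound : ∀ y, c₀ ≤ α y)
    (ε : ℝ) (hε : 0 < ε) (x : EuclideanSpace ℝ (Fin 3)) :
    (∫⁻ y : EuclideanSpace ℝ (Fin 3), ENNReal.ofReal (Ffun α x ε y)) = ENNReal.ofReal 1 := by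
  have hFmeas := Ffun_meas α hα x ε
  have hdim : Module.finrank ℝ (EuclideanSpace ℝ (Fin 3)) - 1 = 2 := by
    rw [finrank_euclideanSpace_fin]
  set e := (homeomorphUnitSphereProd (EuclideanSpace ℝ (Fin 3))).toMeasurableEquiv with he
  have hmp : MeasurePreserving e ((volume : Measure (EuclideanSpace ℝ (Fin 3))).comap Subtype.val)
      ((volume : Measure (EuclideanSpace ℝ (Fin 3))).toSphere.prod (Measure.volumeIoiPow 2)) := by
    rw [← hdim]
    exact Measure.measurePreserving_homeomorphUnitSphereProd volume
  have hprodmeas : Measurable (fun p : Metric.sphere (0 : EuclideanSpace ℝ (Fin 3)) 1 × Set.Ioi (0:ℝ) =>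
      ENNReal.ofReal (Ffun α x ε (p.2.1 • p.1.1))) := by
    apply Measurable.ennreal_ofReal
    exact hFmeas.comp
      (((continuous_subtype_val.comp continuous_snd).smul
        (continuous_subtype_val.comp continuous_fst)).measurable)
  calc ∫⁻ y : EuclideanSpace ℝ (Fin 3), ENNReal.ofReal (Ffun α x ε y)
      = ∫⁻ y in ({0}ᶜ : Set (EuclideanSpace ℝ (Fin 3))), ENNReal.ofReal (Ffun α x ε y) := by
        rw [MeasureTheory.restrict_compl_singleton]
    _ = ∫⁻ z : ({0}ᶜ : Set (EuclideanSpace ℝ (Fin 3))), ENNReal.ofReal (Ffun α x ε z.1)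
          ∂((volume : Measure (EuclideanSpace ℝ (Fin 3))).comap Subtype.val) :=
        (lintegral_subtype_comap (measurableSet_singleton 0).compl _).symm
    _ = ∫⁻ p : Metric.sphere (0 : EuclideanSpace ℝ (Fin 3)) 1 × Set.Ioi (0:ℝ),
          ENNReal.ofReal (Ffun α x ε ((e.symm p).1))
          ∂((volume : Measure (EuclideanSpace ℝ (Fin 3))).toSphere.prod (Measure.volumeIoiPow 2)) :=
        ((hmp.symm e).lintegral_comp
          ((hFmeas.comp measurable_subtype_coe).ennreal_ofReal)).symm
    _ = ∫⁻ p : Metric.sphere (0 : EuclideanSpace ℝ (Fin 3)) 1 × Set.Ioi (0:ℝ),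
          ENNReal.ofReal (Ffun α x ε (p.2.1 • p.1.1))
          ∂((volume : Measure (EuclideanSpace ℝ (Fin 3))).toSphere.prod (Measure.volumeIoiPow 2)) := by
        apply lintegral_congr
        intro p
        congr 1
    _ = ∫⁻ n : Metric.sphere (0 : EuclideanSpace ℝ (Fin 3)) 1, ∫⁻ r : Set.Ioi (0:ℝ),
          ENNReal.ofReal (Ffun α x ε (r.1 • n.1)) ∂(Measure.volumeIoiPow 2)
          ∂(volume : Measure (EuclideanSpace ℝ (Fin 3))).toSphere :=
        lintegral_prod _ hprodmeas.aemeasurable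
    _ = ∫⁻ _m : Metric.sphere (0 : EuclideanSpace ℝ (Fin 3)) 1, ENNReal.ofReal (1/(4*π))
          ∂(volume : Measure (EuclideanSpace ℝ (Fin 3))).toSphere := by
        apply lintegral_congr
        intro n
        exact inner_lint α hα c₀ hc₀ hbound ε hε x n.1
          (mem_sphere_zero_iff_norm.mp n.2)
    _ = ENNReal.ofReal (1/(4*π)) * (volume : Measure (EuclideanSpace ℝ (Fin 3))).toSphere Set.univ :=
        lintegral_const _
    _ = ENNReal.ofReal 1 := by
        rw [Measure.toSphere_apply_univ, ball_vol_3, finrank_euclideanSpace_fin]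
        rw [show ((3:ℕ) : ENNReal) = ENNReal.ofReal 3 by simp]
        rw [← ENNReal.ofReal_mul (by positivity), ← ENNReal.ofReal_mul (by positivity)]
        congr 1
        have : π ≠ 0 := pi_ne_zero
        field_simp

theorem Keps_alpha_integral (α : EuclideanSpace ℝ (Fin 3) → ℝ) (hα : Continuous α)
    (c₀ c₁ : ℝ) (hc₀ : 0 < c₀) (hbound : ∀ x, c₀ ≤ α x ∧ α x ≤ c₁)
    (ε : ℝ) (hε : 0 < ε) (x : EuclideanSpace ℝ (Fin 3)) :
    (∫ η : EuclideanSpace ℝ (Fin 3),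
      α η * Real.exp (-(1/ε) * ∫ t in (0:ℝ)..‖x - η‖, α (x - (t / ‖x - η‖) • (x - η))) /
        (4 * π * ε * ‖x - η‖^2)) = 1 := by
  have hbl : ∀ y, c₀ ≤ α y := fun y => (hbound y).1
  have hstepA : ∀ η : EuclideanSpace ℝ (Fin 3),
      α η * Real.exp (-(1/ε) * ∫ t in (0:ℝ)..‖x - η‖, α (x - (t / ‖x - η‖) • (x - η))) /
        (4 * π * ε * ‖x - η‖^2) = Ffun α x ε (x - η) := by
    intro η
    rw [Ffun, sub_sub_cancel]
    by_cases hxη : η = x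
    · subst hxη
      simp
    · have hne : ‖x - η‖ ≠ 0 := by
        simpa [sub_eq_zero] using fun h => hxη h.symm
      congr 3
      rw [Sfun]
      have := intervalIntegral.integral_comp_div
        (f := fun s : ℝ => α (x - s • (x - η))) (a := (0:ℝ)) (b := ‖x - η‖) hne
      rw [this, zero_div, div_self hne, smul_eq_mul]
  rw [show (fun η : EuclideanSpace ℝ (Fin 3) =>
      α η * Real.exp (-(1/ε) * ∫ t in (0:ℝ)..‖x - η‖, α (x - (t / ‖x - η‖) • (x - η))) /
        (4 * π * ε * ‖x - η‖^2)) = fun η => Ffun α x ε (x - η) from funext hstepA]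
  rw [integral_sub_left_eq_self (Ffun α x ε) volume x]
  rw [integral_eq_lintegral_of_nonneg_ae
    (Filter.Eventually.of_forall (Ffun_nonneg α c₀ hc₀ hbl x ε hε))
    (Ffun_meas α hα x ε).aestronglyMeasurable]
  rw [lint_Ffun α hα c₀ hc₀ hbl ε hε x, ENNReal.toReal_ofReal (by norm_num)]
end
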